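/- arXiv:1904.02587 — 6 statements merged into one kernel-verified Lean document; each statement's English description precedes it below -/
import Mathlib

section
/- Let F(x,y;Λ) be a polynomial with real coefficients in plane variables (x,y) and parameters Λ=(Λ₁,…,Λ_t), t ≥ 1, of the form F(x,y;Λ) = Σ_{0≤i+j≤d} x^i y^j g_{ij}(Λ) where each g_{ij}(Λ) is a polynomial of total degree at most 1 in Λ (the parameters occur linearly). Let U ⊆ ℝ^t and assume the family 𝓕 = {C_λ}_{λ∈U} satisfies the standing assumptions. Then the following two conditions are equivalent: (1) for every λ ∈ U there exist t real points p₁,…,p_t ∈ C_λ \ B_aff such that the affine-linear polynomials f_{p₁}(Λ),…,f_{p_t}(Λ) are linearly independent over ℝ; (2) the family 𝓕 is Hough regular and, for such points p₁,…,p_t, one has ⋂_{p∈C_λ} Γ_p(𝓕) = ⋂_{j=1}^{t} Γ_{p_j}(𝓕) = {λ}. -/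
open MvPolynomial

noncomputable section

/-- `fLam F lam` is the plane polynomial `f_λ(x,y) = F(x,y;λ)` obtained by evaluating the
parameter variables of `F` at `λ`. -/
def fLam {t : ℕ} (F : MvPolynomial (Fin 2) (MvPolynomial (Fin t) ℝ)) (lam : Fin t → ℝ) :
    MvPolynomial (Fin 2) ℝ :=
  MvPolynomial.map (MvPolynomial.eval lam) F

/-- `houghPoly F p` is the polynomial `f_p(Λ) = F(x_p,y_p;Λ)` in the parameters. -/
def houghPoly {t : ℕ} (F : MvPolynomial (Fin 2) (MvPolynomial (Fin t) ℝ)) (p : Fin 2 → ℝ) :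
    MvPolynomial (Fin t) ℝ :=
  MvPolynomial.eval₂ (RingHom.id _) (fun i => MvPolynomial.C (p i)) F

/-- The Hough transform `Γ_p(𝓕) = {λ ∈ ℝ^t : f_p(λ) = 0}`. -/
def Gamma {t : ℕ} (F : MvPolynomial (Fin 2) (MvPolynomial (Fin t) ℝ)) (p : Fin 2 → ℝ) :
    Set (Fin t → ℝ) :=
  {mu | MvPolynomial.eval mu (houghPoly F p) = 0}

/-- The curve `C_λ = {(x,y) ∈ ℝ² : f_λ(x,y) = 0}`. -/
def Curve {t : ℕ} (F : MvPolynomial (Fin 2) (MvPolynomial (Fin t) ℝ)) (lam : Fin t → ℝ) :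
    Set (Fin 2 → ℝ) :=
  {p | MvPolynomial.eval p (fLam F lam) = 0}

/-- The affine base locus `B_aff = {p ∈ ℂ² : f_λ(p) = 0 for all λ ∈ U}`. -/
def Baff {t : ℕ} (F : MvPolynomial (Fin 2) (MvPolynomial (Fin t) ℝ)) (U : Set (Fin t → ℝ)) :
    Set (Fin 2 → ℂ) :=
  {q | ∀ lam ∈ U, MvPolynomial.aeval q (fLam F lam) = 0}

/-- The family `𝓕 = {C_λ}` is Hough regular if `C_λ = C_λ'` implies `λ = λ'` for `λ, λ' ∈ U`. -/
def HoughRegular {t : ℕ} (F : MvPolynomial (Fin 2) (MvPolynomial (Fin t) ℝ))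
    (U : Set (Fin t → ℝ)) : Prop :=
  ∀ lam ∈ U, ∀ lam' ∈ U, Curve F lam = Curve F lam' → lam = lam'

-- case analysis on monomials of degree ≤ 1
lemma deg_le_one_monomial {t : ℕ} (m : Fin t →₀ ℕ) (h : (m.sum fun _ e => e) ≤ 1) :
    m = 0 ∨ ∃ i, m = Finsupp.single i 1 := by
  by_cases h0 : m = 0
  · exact Or.inl h0
  · right
    obtain ⟨i, hi⟩ := Finsupp.ne_iff.mp h0
    simp only [Finsupp.coe_zero, Pi.zero_apply] at hi
    have hi' : 1 ≤ m i := Nat.one_le_iff_ne_zero.mpr hi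
    have hsum : (m.sum fun _ e => e) = ∑ j ∈ m.support, m j := rfl
    have hmem : i ∈ m.support := Finsupp.mem_support_iff.mpr hi
    refine ⟨i, Finsupp.eq_single_iff.mpr ⟨?_, ?_⟩⟩
    · intro j hj
      simp only [Finset.mem_singleton]
      by_contra hji
      have hsub : ({i, j} : Finset (Fin t)) ⊆ m.support := by
        intro k hk
        simp only [Finset.mem_insert, Finset.mem_singleton] at hk
        rcases hk with rfl | rfl
        · exact hmem
        · exact hj
      have h2 := Finset.sum_le_sum_of_subset (f := fun j => m j) hsub
      rw [Finset.sum_pair (fun h => hji h.symm)] at h2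
      have h2' : m i + m j ≤ m.sum fun _ e => e := h2
      have hj' : 1 ≤ m j := Nat.one_le_iff_ne_zero.mpr (Finsupp.mem_support_iff.mp hj)
      omega
    · have hle : m i ≤ ∑ j ∈ m.support, m j := Finset.single_le_sum (fun _ _ => Nat.zero_le _) hmem
      omega

lemma affine_decomp {t : ℕ} (l : MvPolynomial (Fin t) ℝ) (h : l.totalDegree ≤ 1) :
    l = C (coeff 0 l) +
      ∑ i, monomial (Finsupp.single i 1) (coeff (Finsupp.single i 1) l) := by
  ext m
  rw [coeff_add, coeff_C, coeff_sum]
  simp only [coeff_monomial]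
  rcases em (m = 0) with rfl | hm0
  · rw [if_pos rfl]
    have : ∀ i : Fin t, (if Finsupp.single i 1 = 0 then coeff (Finsupp.single i 1) l else 0) = 0 := by
      intro i
      rw [if_neg (by simp [Finsupp.single_eq_zero])]
    rw [Finset.sum_congr rfl (fun i _ => this i), Finset.sum_const_zero, add_zero]
  · rw [if_neg (fun h => hm0 h.symm), zero_add]
    rcases em (∃ i, m = Finsupp.single i 1) with ⟨i0, rfl⟩ | hms
    · rw [Finset.sum_eq_single i0]
      · rw [if_pos rfl]
      · intro i _ hi
        rw [if_neg]
        intro hc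
        exact hi ((Finsupp.single_left_inj one_ne_zero).mp hc)
      · intro hi; exact absurd (Finset.mem_univ i0) hi
    · have hns : m ∉ l.support := by
        intro hmem
        rcases deg_le_one_monomial m ((le_totalDegree hmem).trans h) with rfl | hex
        · exact hm0 rfl
        · exact hms hex
      rw [notMem_support_iff.mp hns]
      rw [Finset.sum_eq_zero]
      intro i _
      rw [if_neg (fun hc => hms ⟨i, hc.symm⟩)]

lemma affine_eval {t : ℕ} {l : MvPolynomial (Fin t) ℝ} (h : l.totalDegree ≤ 1) (mu : Fin t → ℝ) :
    eval mu l = coeff 0 l + ∑ i, coeff (Finsupp.single i 1) l * mu i := by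
  conv_lhs => rw [affine_decomp l h]
  rw [map_add, map_sum, eval_C]
  congr 1
  refine Finset.sum_congr rfl fun i _ => ?_
  rw [eval_monomial]
  simp [Finsupp.prod_single_index]

lemma affine_unique_zero {t : ℕ} {l : Fin t → MvPolynomial (Fin t) ℝ}
    (hdeg : ∀ j, (l j).totalDegree ≤ 1) (hli : LinearIndependent ℝ l)
    {lam mu : Fin t → ℝ} (hlam : ∀ j, eval lam (l j) = 0) (hmu : ∀ j, eval mu (l j) = 0) :
    mu = lam := by
  classical
  set g : Fin t → (Fin t → ℝ) := fun j i => coeff (Finsupp.single i 1) (l j) with hg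
  -- the gradients are linearly independent
  have hgli : LinearIndependent ℝ g := by
    rw [Fintype.linearIndependent_iff] at hli ⊢
    intro c hc
    apply hli c
    set s : MvPolynomial (Fin t) ℝ := ∑ j, c j • l j with hs
    have hdegs : s.totalDegree ≤ 1 :=
      (totalDegree_finset_sum _ _).trans
        (Finset.sup_le fun j _ => (totalDegree_smul_le _ _).trans (hdeg j))
    have hcoef : ∀ i, coeff (Finsupp.single i 1) s = 0 := by
      intro i
      rw [hs, coeff_sum]
      have := congrFun hc i
      simpa [coeff_smul, smul_eq_mul] using this
    have heval : eval lam s = 0 := by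
      rw [hs, map_sum]
      refine Finset.sum_eq_zero fun j _ => ?_
      rw [smul_eq_C_mul, map_mul, eval_C, hlam j, mul_zero]
    have hc0 : coeff 0 s = 0 := by
      have := affine_eval hdegs lam
      rw [heval] at this
      simp [hcoef] at this
      linarith [this]
    have hzero : s = 0 := by
      rw [affine_decomp s hdegs, hc0]
      simp [hcoef]
    exact hzero
  -- gradients span everything
  have hspan : Submodule.span ℝ (Set.range g) = ⊤ :=
    hgli.span_eq_top_of_card_eq_finrank' (by simp [Module.finrank_fin_fun])
  -- the difference vector is orthogonal to all gradients
  set v : Fin t → ℝ := fun i => mu i - lam i with hv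
  have hdot : ∀ j, ∑ i, g j i * v i = 0 := by
    intro j
    have h1 := affine_eval (hdeg j) mu
    have h2 := affine_eval (hdeg j) lam
    rw [hmu j] at h1
    rw [hlam j] at h2
    have : ∑ i, g j i * v i = (∑ i, g j i * mu i) - (∑ i, g j i * lam i) := by
      rw [← Finset.sum_sub_distrib]
      exact Finset.sum_congr rfl fun i _ => by rw [hv]; ring
    rw [this]
    have : (0:ℝ) - 0 = (coeff 0 (l j) + ∑ i, g j i * mu i) - (coeff 0 (l j) + ∑ i, g j i * lam i) := by
      rw [← h1, ← h2]
    linarith [this]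
  -- hence it is orthogonal to everything, so it is zero
  let φ : (Fin t → ℝ) →ₗ[ℝ] ℝ :=
    { toFun := fun w => ∑ i, w i * v i
      map_add' := by intro a b; simp [add_mul, Finset.sum_add_distrib]
      map_smul' := by intro r a; simp [Finset.mul_sum, mul_assoc] }
  have hφ : ∀ w, φ w = 0 := by
    intro w
    have hw : w ∈ Submodule.span ℝ (Set.range g) := by rw [hspan]; trivial
    refine Submodule.span_induction ?_ ?_ ?_ ?_ hw
    · rintro x ⟨j, rfl⟩; exact hdot j
    · simp
    · intro x y _ _ hx hy; rw [map_add, hx, hy, add_zero]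
    · intro r x _ hx; rw [map_smul, hx, smul_zero]
  funext i
  have hvi : mu i - lam i = 0 := by
    simpa [φ, v, Pi.single_apply, Finset.sum_ite_eq'] using hφ (Pi.single i 1)
  linarith

lemma hough_eval_swap {t : ℕ} (F : MvPolynomial (Fin 2) (MvPolynomial (Fin t) ℝ))
    (p : Fin 2 → ℝ) (mu : Fin t → ℝ) :
    MvPolynomial.eval mu (houghPoly F p) = MvPolynomial.eval p (fLam F mu) := by
  rw [houghPoly, fLam, eval_map, eval₂_comp_left (eval mu)]
  congr 1
  funext i
  simp

lemma hough_deg {t : ℕ} (F : MvPolynomial (Fin 2) (MvPolynomial (Fin t) ℝ))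
    (hlin : ∀ m : Fin 2 →₀ ℕ, (F.coeff m).totalDegree ≤ 1) (p : Fin 2 → ℝ) :
    (houghPoly F p).totalDegree ≤ 1 := by
  rw [houghPoly, eval₂_eq]
  refine (totalDegree_finset_sum _ _).trans (Finset.sup_le fun m _ => ?_)
  refine (totalDegree_mul _ _).trans ?_
  have h2 : (∏ i ∈ m.support, (C (p i) : MvPolynomial (Fin t) ℝ) ^ (m i : ℕ)).totalDegree = 0 := by
    simp only [← map_pow, ← map_prod]
    exact totalDegree_C _
  simp only [RingHom.id_apply, h2, add_zero]
  exact hlin m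


/-- Lemma on linearly occurring parameters.
If the parameters occur linearly in `F`, then the following are equivalent:
(1) for every `λ ∈ U` there are `t` real points of `C_λ \ B_aff` whose Hough polynomials
are linearly independent over `ℝ`;
(2) the family is Hough regular and, for such points, `⋂_{p∈C_λ} Γ_p = ⋂_{j=1}^t Γ_{p_j} = {λ}`. -/
theorem statement0 (t d : ℕ) (ht : 1 ≤ t) (hd : 0 < d)
    (F : MvPolynomial (Fin 2) (MvPolynomial (Fin t) ℝ)) (U : Set (Fin t → ℝ))
    -- the parameters occur linearly: every coefficient `g_{ij}(Λ)` has total degree ≤ 1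
    (hlin : ∀ m : Fin 2 →₀ ℕ, (F.coeff m).totalDegree ≤ 1)
    -- standing assumptions
    (hstand : ∀ lam ∈ U, (fLam F lam).totalDegree = d ∧ Irreducible (fLam F lam) ∧
      (Curve F lam).Infinite) :
    (∀ lam ∈ U, ∃ p : Fin t → (Fin 2 → ℝ),
        (∀ j, p j ∈ Curve F lam ∧ (fun i => ((p j i : ℝ) : ℂ)) ∉ Baff F U) ∧
        LinearIndependent ℝ (fun j => houghPoly F (p j)))
    ↔
    (HoughRegular F U ∧ ∀ lam ∈ U, ∃ p : Fin t → (Fin 2 → ℝ),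
        (∀ j, p j ∈ Curve F lam ∧ (fun i => ((p j i : ℝ) : ℂ)) ∉ Baff F U) ∧
        LinearIndependent ℝ (fun j => houghPoly F (p j)) ∧
        (⋂ q ∈ Curve F lam, Gamma F q) = (⋂ j, Gamma F (p j)) ∧
        (⋂ j, Gamma F (p j)) = {lam}) := by
  constructor
  · intro H1
    constructor
    · -- Hough regularity
      intro lam hlam lam' hlam' hcc
      obtain ⟨p, hp, hli⟩ := H1 lam hlam
      refine (affine_unique_zero (l := fun j => houghPoly F (p j))
        (fun j => hough_deg F hlin (p j)) hli (fun j => ?_) (fun j => ?_)).symm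
      · rw [hough_eval_swap]; exact (hp j).1
      · rw [hough_eval_swap]
        have : p j ∈ Curve F lam' := hcc ▸ (hp j).1
        exact this
    · intro lam hlam
      obtain ⟨p, hp, hli⟩ := H1 lam hlam
      have hL : ∀ j, MvPolynomial.eval lam (houghPoly F (p j)) = 0 := fun j => by
        rw [hough_eval_swap]; exact (hp j).1
      have hKey : ∀ mu, (∀ j, MvPolynomial.eval mu (houghPoly F (p j)) = 0) → mu = lam :=
        fun mu hmu => affine_unique_zero (fun j => hough_deg F hlin (p j)) hli hL hmu
      have hInt : (⋂ j, Gamma F (p j)) = {lam} := by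
        ext mu
        simp only [Set.mem_iInter, Set.mem_singleton_iff, Gamma, Set.mem_setOf_eq]
        exact ⟨fun h => hKey mu h, fun h j => h ▸ hL j⟩
      refine ⟨p, hp, hli, ?_, hInt⟩
      apply Set.Subset.antisymm
      · intro mu hmu
        rw [Set.mem_iInter]
        intro j
        exact Set.mem_iInter₂.mp hmu (p j) (hp j).1
      · rw [hInt]
        intro mu hmu
        rw [Set.mem_singleton_iff] at hmu
        subst hmu
        rw [Set.mem_iInter₂]
        intro q hq
        show MvPolynomial.eval mu (houghPoly F q) = 0
        rw [hough_eval_swap]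
        exact hq
  · rintro ⟨_, H2⟩ lam hlam
    obtain ⟨p, hp, hli, _, _⟩ := H2 lam hlam
    exact ⟨p, hp, hli⟩

end
end

section
/- Let 𝓕 = {C_λ}_{λ∈U} be a family of real plane curves of degree d satisfying the standing assumptions, with finite base locus B(ℂ), and set ν_opt := d² − #B(ℂ) + 1. Fix λ ∈ U, take ν_opt arbitrary distinct real points p₁,…,p_{ν_opt} ∈ C_λ \ B_aff, and set T_opt := ⋂_{j=1}^{ν_opt} Γ_{p_j}(𝓕) and T := ⋂_{p∈C_λ} Γ_p(𝓕). Then every λ' ∈ T_opt ∩ U belongs to T; in particular T_opt ∩ U = T ∩ U. -/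
open MvPolynomial

noncomputable section

/-- The degree-`d` homogenization of a plane polynomial, viewed with complex coefficients:
the defining polynomial of the projective closure in `ℙ²(ℂ)`. -/
def projPoly (d : ℕ) (g : MvPolynomial (Fin 2) ℝ) : MvPolynomial (Fin 3) ℂ :=
  g.support.sum fun m =>
    MvPolynomial.monomial
      (Finsupp.equivFunOnFinite.symm ![m 0, m 1, d - (m 0 + m 1)])
      ((g.coeff m : ℝ) : ℂ)

/-- The base locus `B(ℂ)`: points of `ℙ²(ℂ)` lying on the projective closure of every
curve `C_λ`, `λ ∈ U`. -/
def BaseLocus {t : ℕ} (F : MvPolynomial (Fin 2) (MvPolynomial (Fin t) ℝ))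
    (U : Set (Fin t → ℝ)) (d : ℕ) : Set (Projectivization ℂ (Fin 3 → ℂ)) :=
  {P | ∀ lam ∈ U, MvPolynomial.eval P.rep (projPoly d (fLam F lam)) = 0}

/-- Standing assumptions: each `f_λ` is non-constant, irreducible of total degree `d`, its
homogenization is irreducible, and `C_λ` has infinitely many real points. -/
def StandingAssumptions {t : ℕ} (F : MvPolynomial (Fin 2) (MvPolynomial (Fin t) ℝ))
    (U : Set (Fin t → ℝ)) (d : ℕ) : Prop :=
  ∀ lam ∈ U, 0 < (fLam F lam).totalDegree ∧ (fLam F lam).totalDegree = d ∧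
    Irreducible (fLam F lam) ∧ Irreducible (projPoly d (fLam F lam)) ∧
    (Curve F lam).Infinite

namespace BZ

lemma two_mul_choose_two (k : ℕ) : 2 * (k+2).choose 2 = (k+2)*(k+1) := by
  rw [Nat.choose_two_right]
  have h2 : 2 ∣ (k+2)*(k+1) := by
    have := Nat.even_mul_succ_self (k+1)
    rw [mul_comm]; exact this.two_dvd
  have : (k + 2) - 1 = k + 1 := by omega
  rw [this, Nat.mul_div_cancel' h2]

lemma bIdentity (d e : ℕ) :
    (d+(d+e)+2).choose 2 + (e+2).choose 2 = 2 * ((d+e+2).choose 2) + d^2 := by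
  have h1 := two_mul_choose_two (d+(d+e))
  have h2 := two_mul_choose_two e
  have h3 := two_mul_choose_two (d+e)
  nlinarith [h1, h2, h3]

lemma degree_eq_card (f : Fin 3 →₀ ℕ) :
    f.degree = Multiset.card (Finsupp.toMultiset f) := by
  rw [Finsupp.card_toMultiset]; rfl

/-- monomials of degree k over `Fin 3` are in bijection with `Sym (Fin 3) k`. -/
def degEquiv (k : ℕ) : {m : Fin 3 →₀ ℕ // m.degree = k} ≃ Sym (Fin 3) k where
  toFun m := ⟨Finsupp.toMultiset m.1, by rw [← degree_eq_card]; exact m.2⟩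
  invFun s := ⟨Multiset.toFinsupp s.1, by
    rw [degree_eq_card, Multiset.toFinsupp_toMultiset]; exact s.2⟩
  left_inv m := by ext : 1; simp
  right_inv s := by ext : 1; simp

instance fintypeDeg (k : ℕ) : Fintype {m : Fin 3 →₀ ℕ // m.degree = k} :=
  Fintype.ofEquiv _ (degEquiv k).symm

lemma card_deg (k : ℕ) :
    Fintype.card {m : Fin 3 →₀ ℕ // m.degree = k} = (k+2).choose 2 := by
  rw [Fintype.card_congr (degEquiv k), Sym.card_sym_eq_choose]
  have : Fintype.card (Fin 3) + k - 1 = k + 2 := by simp; omega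
  rw [this]
  have h2 : k ≤ k + 2 := by omega
  rw [← Nat.choose_symm h2]
  congr 1; omega

/-- The linear equivalence between the homogeneous submodule and finsupps. -/
def homogEquiv (k : ℕ) :
    (homogeneousSubmodule (Fin 3) ℂ k) ≃ₗ[ℂ] ({m : Fin 3 →₀ ℕ | m.degree = k} →₀ ℂ) :=
  (LinearEquiv.ofEq _ _ (homogeneousSubmodule_eq_finsupp_supported (Fin 3) ℂ k)).trans
    (AddMonoidAlgebra.supportedEquivFinsupp _)

instance fdHomog (k : ℕ) : FiniteDimensional ℂ (homogeneousSubmodule (Fin 3) ℂ k) := by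
  have : FiniteDimensional ℂ ({m : Fin 3 →₀ ℕ | m.degree = k} →₀ ℂ) := by
    have : Fintype ({m : Fin 3 →₀ ℕ | m.degree = k} : Set _) := fintypeDeg k
    infer_instance
  exact Module.Finite.equiv (homogEquiv k).symm

lemma finrank_homog (k : ℕ) :
    Module.finrank ℂ (homogeneousSubmodule (Fin 3) ℂ k) = (k+2).choose 2 := by
  letI : Fintype ({m : Fin 3 →₀ ℕ | m.degree = k} : Set _) := fintypeDeg k
  rw [LinearEquiv.finrank_eq (homogEquiv k), Module.finrank_finsupp_self]
  exact (Fintype.card_congr (Equiv.refl _)).trans (card_deg k)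


lemma degree_eq_sum_univ {n : ℕ} (m : Fin n →₀ ℕ) : m.degree = ∑ i, m i :=
  Finset.sum_subset (Finset.subset_univ _) (fun x _ hx => by
    simpa using Finsupp.notMem_support_iff.mp hx)

lemma eval_smul_homog {φ : MvPolynomial (Fin 3) ℂ} {n : ℕ} (h : φ.IsHomogeneous n)
    (c : ℂ) (v : Fin 3 → ℂ) : eval (c • v) φ = c ^ n * eval v φ := by
  rw [eval_eq', eval_eq', Finset.mul_sum]
  refine Finset.sum_congr rfl fun m hm => ?_
  have hdeg : m.degree = n := by
    by_contra hne
    exact (mem_support_iff.mp hm) (h.coeff_eq_zero hne)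
  have hsum : ∑ i, m i = n := by rw [← degree_eq_sum_univ, hdeg]
  have : ∏ i, (c • v) i ^ m i = c ^ n * ∏ i, v i ^ m i := by
    simp only [Pi.smul_apply, smul_eq_mul, mul_pow]
    rw [Finset.prod_mul_distrib, Finset.prod_pow_eq_pow_sum, hsum]
  rw [this]; ring

lemma sum_fin2 (m : Fin 2 →₀ ℕ) : m.degree = m 0 + m 1 := by
  rw [degree_eq_sum_univ, Fin.sum_univ_two]

lemma support_deg_le {g : MvPolynomial (Fin 2) ℝ} {dd : ℕ} (hg : g.totalDegree ≤ dd)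
    {m : Fin 2 →₀ ℕ} (hm : m ∈ g.support) : m 0 + m 1 ≤ dd := by
  have := le_totalDegree hm
  have h2 : (m.sum fun _ e => e) = m.degree := rfl
  rw [h2, sum_fin2] at this
  omega

lemma projPoly_isHomogeneous {g : MvPolynomial (Fin 2) ℝ} {dd : ℕ} (hg : g.totalDegree ≤ dd) :
    (projPoly dd g).IsHomogeneous dd := by
  apply IsHomogeneous.sum
  intro m hm
  apply isHomogeneous_monomial
  have hle := support_deg_le hg hm
  have hrw : ∀ i, (Finsupp.equivFunOnFinite.symm ![m 0, m 1, dd - (m 0 + m 1)]) i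
      = ![m 0, m 1, dd - (m 0 + m 1)] i := fun i => rfl
  rw [degree_eq_sum_univ]
  simp only [hrw]
  rw [Fin.sum_univ_three]
  simp only [Matrix.cons_val_zero, Matrix.cons_val_one, Matrix.head_cons,
    Matrix.cons_val_two, Matrix.tail_cons]
  omega

/-- lift of a real affine point to ℂ³ -/
def liftP (q : Fin 2 → ℝ) : Fin 3 → ℂ := ![(q 0 : ℂ), (q 1 : ℂ), 1]

lemma liftP_ne_zero (q : Fin 2 → ℝ) : liftP q ≠ 0 := by
  intro h
  have := congrFun h 2
  simp [liftP] at this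

lemma eval_liftP {g : MvPolynomial (Fin 2) ℝ} {dd : ℕ} (hg : g.totalDegree ≤ dd)
    (q : Fin 2 → ℝ) :
    eval (liftP q) (projPoly dd g) = ((eval q g : ℝ) : ℂ) := by
  rw [projPoly, map_sum, eval_eq']
  push_cast
  refine Finset.sum_congr rfl fun m hm => ?_
  rw [eval_monomial]
  have hrw : ∀ i, (Finsupp.equivFunOnFinite.symm ![m 0, m 1, dd - (m 0 + m 1)]) i
      = ![m 0, m 1, dd - (m 0 + m 1)] i := fun i => rfl
  rw [Finsupp.prod_fintype _ _ (fun i => pow_zero _)]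
  simp only [hrw]
  rw [Fin.prod_univ_two, Fin.prod_univ_three]
  simp only [Matrix.cons_val_zero, Matrix.cons_val_one, Matrix.head_cons,
    Matrix.cons_val_two, Matrix.tail_cons, liftP]
  push_cast
  ring


lemma factor_homog {f c : MvPolynomial (Fin 3) ℂ} {dd e : ℕ} (hf : f.IsHomogeneous dd)
    (hf0 : f ≠ 0) (h : (f * c).IsHomogeneous (dd + e)) : c.IsHomogeneous e := by
  classical
  have key : ∀ i : ℕ, i ≠ e → homogeneousComponent i c = 0 := by
    intro i hi
    have hsum : (∑ j ∈ Finset.range (c.totalDegree + 1), f * homogeneousComponent j c) = f * c := by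
      rw [← Finset.mul_sum, sum_homogeneousComponent]
    have h1 : homogeneousComponent (dd + i) (f * c) = 0 := by
      rw [homogeneousComponent_of_mem h]
      simp only [if_neg (by omega : ¬ dd + i = dd + e)]
    by_cases hic : i ∈ Finset.range (c.totalDegree + 1)
    · have h2 : homogeneousComponent (dd + i) (f * c)
          = ∑ j ∈ Finset.range (c.totalDegree + 1),
              homogeneousComponent (dd + i) (f * homogeneousComponent j c) := by
        rw [← hsum, map_sum]
      have h3 : ∀ j ∈ Finset.range (c.totalDegree + 1),
          homogeneousComponent (dd + i) (f * homogeneousComponent j c)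
          = if j = i then f * homogeneousComponent j c else 0 := by
        intro j _
        rw [homogeneousComponent_of_mem (hf.mul (homogeneousComponent_isHomogeneous j c))]
        by_cases hji : j = i
        · simp [hji]
        · rw [if_neg (by omega), if_neg hji]
      rw [Finset.sum_congr rfl h3, Finset.sum_ite_eq' _ i, if_pos hic] at h2
      have h4 : f * homogeneousComponent i c = 0 := by rw [← h2, h1]
      rcases mul_eq_zero.mp h4 with h5 | h5
      · exact absurd h5 hf0
      · exact h5
    · exact homogeneousComponent_eq_zero _ _ (by simp at hic; omega)
  by_cases he : e ∈ Finset.range (c.totalDegree + 1)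
  · have : c = homogeneousComponent e c := by
      conv_lhs => rw [← sum_homogeneousComponent c]
      rw [Finset.sum_eq_single e (fun j _ hj => key j hj) (fun hc => absurd he hc)]
    rw [this]
    exact homogeneousComponent_isHomogeneous e c
  · have : c = 0 := by
      conv_lhs => rw [← sum_homogeneousComponent c]
      refine Finset.sum_eq_zero fun j hj => key j ?_
      intro hje; rw [hje] at hj; exact he hj
    rw [this]; exact isHomogeneous_zero _ _ _

lemma exists_sep {u w : Fin 3 → ℂ} (hw : w ≠ 0) (hns : ∀ cc : ℂ, u ≠ cc • w) :
    ∃ ℓ : MvPolynomial (Fin 3) ℂ, ℓ.IsHomogeneous 1 ∧ eval w ℓ = 0 ∧ eval u ℓ ≠ 0 := by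
  obtain ⟨tt, ht⟩ : ∃ tt, w tt ≠ 0 := by
    by_contra hc; push_neg at hc; exact hw (funext hc)
  by_cases H : ∃ s, u s * w tt - u tt * w s ≠ 0
  · obtain ⟨s, hs⟩ := H
    refine ⟨C (w tt) * X s - C (w s) * X tt, ?_, ?_, ?_⟩
    · exact ((isHomogeneous_X ℂ s).C_mul _).sub ((isHomogeneous_X ℂ tt).C_mul _)
    · simp [mul_comm]
    · simpa [mul_comm, sub_ne_zero] using sub_ne_zero.mp hs
  · push_neg at H
    exfalso
    apply hns (u tt / w tt)
    funext s
    have := H s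
    rw [Pi.smul_apply, smul_eq_mul, div_mul_eq_mul_div, eq_div_iff ht]
    have h2 : u s * w tt = u tt * w s := by linear_combination this
    linear_combination h2

lemma eval_houghPoly {t : ℕ} (F : MvPolynomial (Fin 2) (MvPolynomial (Fin t) ℝ))
    (q : Fin 2 → ℝ) (mu : Fin t → ℝ) :
    eval mu (houghPoly F q) = eval q (fLam F mu) := by
  rw [houghPoly, fLam, eval_map, eval₂_comp_left (eval mu) (RingHom.id _) _ F]
  congr 1
  ext r : 1
  simp

lemma aeval_cast {φ : MvPolynomial (Fin 2) ℝ} (q : Fin 2 → ℝ) :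
    MvPolynomial.aeval (fun i => ((q i : ℝ) : ℂ)) φ = ((eval q φ : ℝ) : ℂ) := by
  have := eval₂_comp_left (algebraMap ℝ ℂ) (RingHom.id ℝ) q φ
  rw [aeval_def]
  have h2 : ((eval q φ : ℝ) : ℂ) = (algebraMap ℝ ℂ) (eval₂ (RingHom.id ℝ) q φ) := rfl
  rw [h2, this]
  rfl


def mulMap (f : MvPolynomial (Fin 3) ℂ) {m : ℕ} (hf : f.IsHomogeneous m) (n : ℕ) :
    homogeneousSubmodule (Fin 3) ℂ n →ₗ[ℂ] homogeneousSubmodule (Fin 3) ℂ (m + n) where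
  toFun a := ⟨f * a.1, hf.mul a.2⟩
  map_add' a b := by ext; simp [mul_add]
  map_smul' r a := by ext; simp [Algebra.mul_smul_comm]

set_option maxHeartbeats 1000000 in
lemma weak_bezout {d : ℕ} {f g : MvPolynomial (Fin 3) ℂ}
    (hfh : f.IsHomogeneous d) (hgh : g.IsHomogeneous d)
    (hfp : Prime f) (hndvd : ¬ f ∣ g)
    (v : Fin (d^2+1) → (Fin 3 → ℂ))
    (hv0 : ∀ i, v i ≠ 0)
    (hvind : ∀ i j, i ≠ j → ∀ c : ℂ, v i ≠ c • v j)
    (hvf : ∀ i, eval (v i) f = 0) (hvg : ∀ i, eval (v i) g = 0) : False := by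
  classical
  -- separating homogeneous polynomials
  have hsep : ∀ i : Fin (d^2+1), ∃ hh : MvPolynomial (Fin 3) ℂ,
      hh.IsHomogeneous (d+(d+d^2)) ∧ eval (v i) hh ≠ 0 ∧ ∀ j, j ≠ i → eval (v j) hh = 0 := by
    intro i
    obtain ⟨s, hs⟩ : ∃ s, v i s ≠ 0 := by
      by_contra hc; push_neg at hc
      exact hv0 i (funext fun x => hc x)
    have hch : ∀ j : Fin (d^2+1), j ≠ i → ∃ ℓ : MvPolynomial (Fin 3) ℂ,
        ℓ.IsHomogeneous 1 ∧ eval (v j) ℓ = 0 ∧ eval (v i) ℓ ≠ 0 := by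
      intro j hj
      exact exists_sep (hv0 j) (fun c => hvind i j (Ne.symm hj) c)
    choose ℓ hℓh hℓ0 hℓi using hch
    have hTcard : (Finset.univ.erase i : Finset (Fin (d^2+1))).card = d^2 := by
      rw [Finset.card_erase_of_mem (Finset.mem_univ i), Finset.card_univ]
      simp
    refine ⟨(X s)^(2*d) * ∏ j ∈ (Finset.univ.erase i : Finset (Fin (d^2+1))).attach,
      ℓ j.1 (Finset.ne_of_mem_erase j.2), ?_, ?_, ?_⟩
    · have h1 : ((X s : MvPolynomial (Fin 3) ℂ)^(2*d)).IsHomogeneous (2*d) := by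
        simpa using (isHomogeneous_X ℂ s).pow (2*d)
      have h2 : (∏ j ∈ (Finset.univ.erase i : Finset (Fin (d^2+1))).attach,
          ℓ j.1 (Finset.ne_of_mem_erase j.2)).IsHomogeneous (d^2) := by
        have := IsHomogeneous.prod (Finset.univ.erase i).attach
          (fun j => ℓ j.1 (Finset.ne_of_mem_erase j.2)) (fun _ => 1)
          (fun j _ => hℓh j.1 _)
        simpa [Finset.card_attach, hTcard] using this
      have h3 := h1.mul h2
      have heq : 2*d + d^2 = d + (d+d^2) := by ring
      rwa [heq] at h3
    · rw [map_mul, map_pow]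
      refine mul_ne_zero (pow_ne_zero _ (by simpa using hs)) ?_
      rw [map_prod]
      exact Finset.prod_ne_zero_iff.mpr fun j _ => hℓi j.1 _
    · intro j hj
      rw [map_mul, map_prod]
      have hjT : j ∈ (Finset.univ.erase i : Finset (Fin (d^2+1))) :=
        Finset.mem_erase.mpr ⟨hj, Finset.mem_univ j⟩
      exact mul_eq_zero_of_right _
        (Finset.prod_eq_zero (Finset.mem_attach _ ⟨j, hjT⟩) (hℓ0 j hj))
  choose h hhom hne hvan using hsep
  -- linear algebra
  have hMfker : LinearMap.ker (mulMap f hfh (d^2)) = ⊥ := by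
    rw [LinearMap.ker_eq_bot']
    intro c hc
    have h1 : f * c.1 = 0 := congrArg Subtype.val hc
    rcases mul_eq_zero.mp h1 with h2 | h2
    · exact absurd h2 hfp.ne_zero
    · exact Subtype.ext h2
  obtain ⟨π, hπ⟩ := (mulMap f hfh (d^2)).exists_leftInverse_of_injective hMfker
  have hdd : d + d^2 = d + d^2 := rfl
  let Sk := homogeneousSubmodule (Fin 3) ℂ (d+(d+d^2))
  let Sde := homogeneousSubmodule (Fin 3) ℂ (d+d^2)
  let Se := homogeneousSubmodule (Fin 3) ℂ (d^2)
  let hv : Fin (d^2+1) → Sk := fun i => ⟨h i, hhom i⟩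
  let Φ1 : (Fin (d^2+1) → ℂ) →ₗ[ℂ] Sk := Fintype.linearCombination ℂ hv
  let ΦA : ((Fin (d^2+1) → ℂ) × (Sde × Sde)) →ₗ[ℂ] Sk :=
    Φ1 ∘ₗ LinearMap.fst ℂ _ _
    + (mulMap f hfh (d+d^2)) ∘ₗ ((LinearMap.fst ℂ Sde Sde) ∘ₗ LinearMap.snd ℂ _ _)
    + (mulMap g hgh (d+d^2)) ∘ₗ ((LinearMap.snd ℂ Sde Sde) ∘ₗ LinearMap.snd ℂ _ _)
  let ΦB : ((Fin (d^2+1) → ℂ) × (Sde × Sde)) →ₗ[ℂ] Se :=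
    π ∘ₗ ((LinearMap.snd ℂ Sde Sde) ∘ₗ LinearMap.snd ℂ _ _)
  have hΦinj : Function.Injective (ΦA.prod ΦB) := by
    rw [← LinearMap.ker_eq_bot, LinearMap.ker_eq_bot']
    rintro ⟨c, a, b⟩ hx
    have hxA : ΦA (c, a, b) = 0 := by
      have := congrArg Prod.fst hx; simpa using this
    have hxB : ΦB (c, a, b) = 0 := by
      have := congrArg Prod.snd hx; simpa using this
    have hA : (∑ i, c i • h i) + f * a.1 + g * b.1 = 0 := by
      have h0 := congrArg Subtype.val hxA
      simpa [ΦA, Φ1, Fintype.linearCombination, mulMap, hv] using h0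
    -- evaluate at v j to get c = 0
    have hc0 : ∀ j, c j = 0 := by
      intro j
      have h1 := congrArg (eval (v j)) hA
      rw [map_add, map_add, map_mul, map_mul, hvf j, hvg j, map_sum] at h1
      simp only [smul_eval, mul_zero, add_zero, map_zero, zero_mul] at h1
      rw [Finset.sum_eq_single j (fun i _ hij => by rw [hvan i j (Ne.symm hij), mul_zero])
        (fun hc => absurd (Finset.mem_univ j) hc)] at h1
      rcases mul_eq_zero.mp h1 with h2 | h2
      · exact h2
      · exact absurd h2 (hne j)
    have hA2 : f * a.1 + g * b.1 = 0 := by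
      have hs0 : (∑ i, c i • h i) = 0 := by
        refine Finset.sum_eq_zero fun i _ => by rw [hc0 i, zero_smul]
      rw [hs0, zero_add] at hA
      exact hA
    -- f divides b
    have hb0 : b.1 = 0 := by
      by_contra hbne
      have hdvd : f ∣ b.1 := by
        rcases hfp.2.2 g b.1 ⟨-a.1, by linear_combination hA2⟩ with h2 | h2
        · exact absurd h2 hndvd
        · exact h2
      obtain ⟨c0, hc0'⟩ := hdvd
      have hc0h : c0.IsHomogeneous (d^2) := by
        apply factor_homog hfh hfp.ne_zero
        rw [← hc0']
        exact b.2
      have hbMf : (mulMap f hfh (d^2)) ⟨c0, hc0h⟩ = b := by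
        apply Subtype.ext
        simpa [mulMap] using hc0'.symm
      have hπ0 : π b = 0 := by
        simpa [ΦB] using hxB
      have hz : (⟨c0, hc0h⟩ : Se) = 0 := by
        have h3 := congrArg π hbMf
        rw [hπ0] at h3
        have h4 : π ((mulMap f hfh (d^2)) ⟨c0, hc0h⟩) = ⟨c0, hc0h⟩ := by
          have h5 := congrArg (fun m => m ⟨c0, hc0h⟩) hπ
          simpa using h5
        rw [h4] at h3; exact h3
      apply hbne
      rw [hc0', show c0 = 0 from congrArg Subtype.val hz, mul_zero]
    have ha0 : a.1 = 0 := by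
      have h6 : f * a.1 = 0 := by
        have h7 := hA2; rw [hb0, mul_zero, add_zero] at h7; exact h7
      rcases mul_eq_zero.mp h6 with h2 | h2
      · exact absurd h2 hfp.ne_zero
      · exact h2
    exact Prod.ext (funext hc0) (Prod.ext (Subtype.ext ha0) (Subtype.ext hb0))
  have hle := LinearMap.finrank_le_finrank_of_injective hΦinj
  rw [Module.finrank_prod, Module.finrank_prod, Module.finrank_prod,
    Module.finrank_fin_fun] at hle
  have e1 := finrank_homog (d+(d+d^2))
  have e2 := finrank_homog (d+d^2)
  have e3 := finrank_homog (d^2)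
  have hb := bIdentity d (d^2)
  rw [e1, e2, e3] at hle
  omega


end BZ

set_option maxHeartbeats 1000000 in
/-- Proposition, part 2. With `ν_opt := d² − #B(ℂ) + 1` and `ν_opt` distinct
real points `p_j ∈ C_λ \ B_aff`, setting `T_opt := ⋂_j Γ_{p_j}(𝓕)` and
`T := ⋂_{p ∈ C_λ} Γ_p(𝓕)`, every `λ' ∈ T_opt ∩ U` belongs to `T`; in particular
`T_opt ∩ U = T ∩ U`. -/
theorem statement3 (t d : ℕ) (hd : 0 < d)
    (F : MvPolynomial (Fin 2) (MvPolynomial (Fin t) ℝ)) (U : Set (Fin t → ℝ))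
    (hstand : StandingAssumptions F U d)
    (hBfin : (BaseLocus F U d).Finite)
    (lam : Fin t → ℝ) (hlam : lam ∈ U)
    (p : Fin (d ^ 2 - (BaseLocus F U d).ncard + 1) → (Fin 2 → ℝ))
    (hinj : Function.Injective p)
    (hp : ∀ j, p j ∈ Curve F lam ∧ (fun i => ((p j i : ℝ) : ℂ)) ∉ Baff F U) :
    ((⋂ j, Gamma F (p j)) ∩ U ⊆ ⋂ q ∈ Curve F lam, Gamma F q) ∧
    (⋂ j, Gamma F (p j)) ∩ U = (⋂ q ∈ Curve F lam, Gamma F q) ∩ U := by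
  classical
  have hsub : (⋂ j, Gamma F (p j)) ∩ U ⊆ ⋂ q ∈ Curve F lam, Gamma F q := by
    rintro lam' ⟨hT', hU'⟩
    have hT : ∀ j, eval (p j) (fLam F lam') = 0 := by
      intro j
      have h0 := Set.mem_iInter.mp hT' j
      rw [Gamma, Set.mem_setOf_eq, BZ.eval_houghPoly] at h0
      exact h0
    refine Set.mem_iInter₂.mpr fun q hq => ?_
    have hq' : eval q (fLam F lam) = 0 := hq
    show eval lam' (houghPoly F q) = 0
    rw [BZ.eval_houghPoly]
    obtain ⟨hpos, hdeg, hirr, hprojirr, hinf⟩ := hstand lam hlam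
    obtain ⟨hpos', hdeg', hirr', hprojirr', hinf'⟩ := hstand lam' hU'
    by_cases hdvd : projPoly d (fLam F lam) ∣ projPoly d (fLam F lam')
    · obtain ⟨u, hu⟩ := hdvd
      have h1 := congrArg (eval (BZ.liftP q)) hu
      rw [map_mul, BZ.eval_liftP hdeg.le q, BZ.eval_liftP hdeg'.le q, hq',
        Complex.ofReal_zero, zero_mul] at h1
      exact_mod_cast h1
    · exfalso
      have hfp : Prime (projPoly d (fLam F lam)) :=
        (UniqueFactorizationMonoid.irreducible_iff_prime).mp hprojirr
      -- the points
      let mkPt : Fin (d ^ 2 - (BaseLocus F U d).ncard + 1) → Projectivization ℂ (Fin 3 → ℂ) :=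
        fun j => Projectivization.mk ℂ (BZ.liftP (p j)) (BZ.liftP_ne_zero _)
      -- rep of mkPt j is a nonzero multiple of liftP (p j)
      have hrep : ∀ j : Fin (d ^ 2 - (BaseLocus F U d).ncard + 1), ∃ a : ℂ, a ≠ 0 ∧ a • BZ.liftP (p j) = (mkPt j).rep := by
        intro j
        have h2 : Projectivization.mk ℂ (mkPt j).rep (mkPt j).rep_nonzero = mkPt j :=
          Projectivization.mk_rep _
        have h3 := (Projectivization.mk_eq_mk_iff' ℂ _ _ (mkPt j).rep_nonzero
          (BZ.liftP_ne_zero _)).mp h2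
        obtain ⟨a, ha⟩ := h3
        refine ⟨a, ?_, ha⟩
        intro ha0
        apply (mkPt j).rep_nonzero
        rw [← ha, ha0, zero_smul]
      -- eval of any projPoly at rep of mkPt j
      have hevalPt : ∀ (j : Fin (d ^ 2 - (BaseLocus F U d).ncard + 1)) (μ : Fin t → ℝ), μ ∈ U →
          (eval (mkPt j).rep (projPoly d (fLam F μ)) = 0 ↔ eval (p j) (fLam F μ) = 0) := by
        intro j μ hμ
        obtain ⟨a, ha0, ha⟩ := hrep j
        rw [← ha, BZ.eval_smul_homog (BZ.projPoly_isHomogeneous (hstand μ hμ).2.1.le),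
          BZ.eval_liftP (hstand μ hμ).2.1.le]
        constructor
        · intro h4
          rcases mul_eq_zero.mp h4 with h5 | h5
          · exact absurd h5 (pow_ne_zero _ ha0)
          · exact_mod_cast h5
        · intro h4; rw [h4]; simp
      -- mkPt j is not in the base locus
      have hnotB : ∀ j, mkPt j ∉ BaseLocus F U d := by
        intro j hmem
        have h4 := (hp j).2
        apply h4
        intro μ hμ
        have h5 := hmem μ hμ
        rw [hevalPt j μ hμ] at h5
        rw [BZ.aeval_cast (p j), h5, Complex.ofReal_zero]
      -- mkPt is injective
      have hmkinj : Function.Injective mkPt := by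
        intro j j' hjj
        have h3 := (Projectivization.mk_eq_mk_iff' ℂ _ _ (BZ.liftP_ne_zero (p j))
          (BZ.liftP_ne_zero (p j'))).mp hjj
        obtain ⟨a, ha⟩ := h3
        have h2 := congrFun ha 2
        simp [BZ.liftP] at h2
        rw [h2, one_smul] at ha
        apply hinj
        funext i
        have h5 : (BZ.liftP (p j') : Fin 3 → ℂ) (Fin.castSucc i) = BZ.liftP (p j) (Fin.castSucc i) := congrFun ha (Fin.castSucc i)
        fin_cases i <;> · simp [BZ.liftP] at h5; exact_mod_cast h5.symm
      -- the big point set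
      have hdisj : Disjoint (BaseLocus F U d) (Set.range mkPt) := by
        rw [Set.disjoint_right]
        rintro x ⟨j, rfl⟩
        exact hnotB j
      have hfin : (BaseLocus F U d ∪ Set.range mkPt).Finite :=
        hBfin.union (Set.finite_range mkPt)
      have hcard : d^2 + 1 ≤ (BaseLocus F U d ∪ Set.range mkPt).ncard := by
        rw [Set.ncard_union_eq hdisj hBfin (Set.finite_range mkPt)]
        have h6 : (Set.range mkPt).ncard = d ^ 2 - (BaseLocus F U d).ncard + 1 := by
          rw [← Set.image_univ, Set.ncard_image_of_injective _ hmkinj, Set.ncard_univ]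
          simp
        omega
      obtain ⟨W, hWsub, hWcard⟩ := Set.exists_subset_card_eq hcard
      have hWfin : W.Finite := hfin.subset hWsub
      have hWcard' : hWfin.toFinset.card = d^2+1 := by
        rw [← Set.ncard_eq_toFinset_card W hWfin]
        exact hWcard
      let eqv := (Finset.equivFinOfCardEq hWcard').symm
      let v : Fin (d^2+1) → (Fin 3 → ℂ) := fun i => ((eqv i).1).rep
      have hmemW : ∀ i, ((eqv i).1) ∈ W := fun i => by
        have := (eqv i).2
        rwa [Set.Finite.mem_toFinset] at this
      have hevalW : ∀ P ∈ W, eval (Projectivization.rep P) (projPoly d (fLam F lam)) = 0 ∧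
          eval (Projectivization.rep P) (projPoly d (fLam F lam')) = 0 := by
        intro P hP
        rcases hWsub hP with hB | ⟨j, rfl⟩
        · exact ⟨hB lam hlam, hB lam' hU'⟩
        · constructor
          · rw [hevalPt j lam hlam]; exact (hp j).1
          · rw [hevalPt j lam' hU']; exact hT j
      refine BZ.weak_bezout (BZ.projPoly_isHomogeneous hdeg.le)
        (BZ.projPoly_isHomogeneous hdeg'.le) hfp hdvd v
        (fun i => Projectivization.rep_nonzero _) ?_
        (fun i => (hevalW _ (hmemW i)).1) (fun i => (hevalW _ (hmemW i)).2)
      intro i j hij c hc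
      have hc0 : c ≠ 0 := by
        intro h0
        rw [h0, zero_smul] at hc
        exact Projectivization.rep_nonzero _ hc
      have h7 : (eqv i).1 = (eqv j).1 := by
        have h8 : Projectivization.mk ℂ (v i) (Projectivization.rep_nonzero _)
            = Projectivization.mk ℂ (v j) (Projectivization.rep_nonzero _) := by
          apply (Projectivization.mk_eq_mk_iff' ℂ _ _ _ _).mpr
          exact ⟨c, hc.symm⟩
        have h9 : (eqv i).1 = (eqv j).1 := by
          have hi := Projectivization.mk_rep ((eqv i).1)
          have hj := Projectivization.mk_rep ((eqv j).1)
          rw [← hi, ← hj]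
          exact h8
        exact h9
      exact hij (eqv.injective (Subtype.ext h7))
  refine ⟨hsub, Set.Subset.antisymm (fun x hx => ⟨hsub hx, hx.2⟩) ?_⟩
  rintro x ⟨hT, hU⟩
  refine ⟨Set.mem_iInter.mpr fun j => ?_, hU⟩
  exact Set.mem_iInter₂.mp hT (p j) (hp j).1

end
end

section
/- Let 𝓕 = {C_λ}_{λ∈U} be a family of real plane curves of degree d satisfying the standing assumptions, with finite base locus B(ℂ), and set ν_opt := d² − #B(ℂ) + 1. Fix λ ∈ U and take ν_opt arbitrary distinct real points p₁,…,p_{ν_opt} ∈ C_λ \ B_aff. If the family 𝓕 is Hough regular, then ⋂_{j=1}^{ν_opt} Γ_{p_j}(𝓕) ∩ U = {λ}. -/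
open MvPolynomial

noncomputable section
open Module

lemma finsuppDegree_eq_sum {k : ℕ} (x : Fin k →₀ ℕ) : x.degree = ∑ i, x i := by
  rw [Finsupp.degree]
  exact Finset.sum_subset (Finset.subset_univ _) (by
    intro i _ hi
    simpa using (Finsupp.notMem_support_iff.mp hi))

/-- Equivalence between degree-`n` finsupps and `Sym`. -/
def symEquiv (n : ℕ) : ↥{x : Fin 3 →₀ ℕ | x.degree = n} ≃ Sym (Fin 3) n where
  toFun x := ⟨Finsupp.toMultiset x.1, by
    rw [Finsupp.card_toMultiset]; exact x.2⟩
  invFun s := ⟨Multiset.toFinsupp s.1, by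
    have : Multiset.card (Finsupp.toMultiset (Multiset.toFinsupp s.1)) = n := by
      simp [s.2]
    rw [Finsupp.card_toMultiset] at this
    exact this⟩
  left_inv x := by ext; simp
  right_inv s := by ext; simp

instance symFintype (n : ℕ) : Fintype ↥{x : Fin 3 →₀ ℕ | x.degree = n} :=
  Fintype.ofEquiv _ (symEquiv n).symm

lemma card_degree (n : ℕ) :
    Fintype.card ↥{x : Fin 3 →₀ ℕ | x.degree = n} = (n + 2).choose 2 := by
  rw [Fintype.card_congr (symEquiv n), Sym.card_sym_eq_multichoose, Nat.multichoose_eq]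
  have : Fintype.card (Fin 3) + n - 1 = n + 2 := by simp; omega
  rw [this, ← Nat.choose_symm (by omega : n ≤ n + 2)]
  congr 1
  omega

abbrev Vh (n : ℕ) : Submodule ℂ (MvPolynomial (Fin 3) ℂ) := homogeneousSubmodule (Fin 3) ℂ n

lemma Vh_eq (n : ℕ) : Vh n = MvPolynomial.restrictSupport ℂ {d | d.degree = n} :=
  homogeneousSubmodule_eq_finsupp_supported (Fin 3) ℂ n

def VhEquiv (n : ℕ) : Vh n ≃ₗ[ℂ] MvPolynomial.restrictSupport ℂ {d : Fin 3 →₀ ℕ | d.degree = n} :=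
  LinearEquiv.ofEq _ _ (Vh_eq n)

instance Vh_fd (n : ℕ) : FiniteDimensional ℂ (Vh n) := by
  haveI := Module.Finite.of_basis (MvPolynomial.basisRestrictSupport ℂ {d : Fin 3 →₀ ℕ | d.degree = n})
  exact Module.Finite.equiv (VhEquiv n).symm

lemma finrank_Vh (n : ℕ) : finrank ℂ (Vh n) = (n + 2).choose 2 := by
  rw [(VhEquiv n).finrank_eq, finrank_eq_card_basis
    (MvPolynomial.basisRestrictSupport ℂ {d : Fin 3 →₀ ℕ | d.degree = n})]
  exact card_degree n

lemma Tsucc (k : ℕ) : (k + 3).choose 2 = (k + 2).choose 2 + (k + 2) := by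
  rw [show k + 3 = (k + 2) + 1 from rfl, Nat.choose_succ_succ (k + 2) 1]
  simp [Nat.choose_one_right]
  omega

lemma Tid (m d e : ℕ) :
    (m + d + e + 2).choose 2 + (m + 2).choose 2
      = (m + d + 2).choose 2 + (m + e + 2).choose 2 + d * e := by
  induction e with
  | zero => simp
  | succ e ih =>
    have h1 : m + d + (e + 1) + 2 = (m + d + e) + 3 := by omega
    have h2 : m + (e + 1) + 2 = (m + e) + 3 := by omega
    have h3 : d * (e + 1) = d * e + d := by ring
    rw [h1, h2, Tsucc, Tsucc, h3]
    omega

/-- Evaluation of a homogeneous polynomial at a scaled point. -/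
lemma eval_smul_of_isHomogeneous {h : MvPolynomial (Fin 3) ℂ} {n : ℕ}
    (hh : h.IsHomogeneous n) (c : ℂ) (v : Fin 3 → ℂ) :
    eval (c • v) h = c ^ n * eval v h := by
  rw [eval_eq', eval_eq', Finset.mul_sum]
  refine Finset.sum_congr rfl fun m hm => ?_
  have hdeg : m.degree = n := by
    by_contra hne
    exact (mem_support_iff.mp hm) (hh.coeff_eq_zero hne)
  have : ∏ i, (c • v) i ^ m i = c ^ n * ∏ i, v i ^ m i := by
    have : ∏ i, (c • v) i ^ m i = (∏ i, c ^ m i) * ∏ i, v i ^ m i := by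
      rw [← Finset.prod_mul_distrib]
      exact Finset.prod_congr rfl fun i _ => by simp [mul_pow]
    rw [this, Finset.prod_pow_eq_pow_sum, ← finsuppDegree_eq_sum, hdeg]
  rw [this]; ring

/-- `g * (homogeneousComponent i c)` is the degree `e+i` component of `g * c`. -/
lemma mul_homogeneousComponent {g c : MvPolynomial (Fin 3) ℂ} {e : ℕ}
    (hg : g.IsHomogeneous e) (i : ℕ) :
    g * homogeneousComponent i c = homogeneousComponent (e + i) (g * c) := by
  classical
  conv_rhs => rw [← sum_homogeneousComponent c]
  rw [Finset.mul_sum, map_sum]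
  have key : ∀ j, homogeneousComponent (e + i) (g * homogeneousComponent j c)
      = if j = i then g * homogeneousComponent j c else 0 := by
    intro j
    have hmem : g * homogeneousComponent j c ∈ homogeneousSubmodule (Fin 3) ℂ (e + j) :=
      (mem_homogeneousSubmodule _ _).mpr
        (hg.mul (homogeneousComponent_isHomogeneous j c))
    rw [homogeneousComponent_of_mem hmem,
      if_congr (by omega : (e + i = e + j) ↔ j = i) rfl rfl]
  rw [Finset.sum_congr rfl fun j _ => key j]
  by_cases hi : i ∈ Finset.range (c.totalDegree + 1)
  · rw [Finset.sum_ite_eq' _ i, if_pos hi]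
  · rw [Finset.sum_ite_eq' _ i, if_neg hi]
    have : homogeneousComponent i c = 0 :=
      homogeneousComponent_eq_zero _ _ (by simpa using Nat.lt_of_succ_le (not_lt.mp (by simpa using hi)))
    rw [this, mul_zero]

/-- Quotient of homogeneous by homogeneous is (can be chosen) homogeneous. -/
lemma exists_homogeneous_cofactor {g c : MvPolynomial (Fin 3) ℂ} {e k : ℕ}
    (hg : g.IsHomogeneous e) (hek : e ≤ k)
    (hgc : (g * c).IsHomogeneous k) :
    ∃ c', c'.IsHomogeneous (k - e) ∧ g * c' = g * c := by
  refine ⟨homogeneousComponent (k - e) c, homogeneousComponent_isHomogeneous _ _, ?_⟩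
  rw [mul_homogeneousComponent hg]
  have : e + (k - e) = k := by omega
  rw [this, homogeneousComponent_of_mem ((mem_homogeneousSubmodule _ _).mpr hgc), if_pos rfl]

/-- A linear form vanishing at `w` but not at `v`, for non-proportional `v`, `w`. -/
lemma exists_sep {v w : Fin 3 → ℂ} (hw : w ≠ 0) (h : ¬ ∃ c : ℂ, c • w = v) :
    ∃ L : MvPolynomial (Fin 3) ℂ, L.IsHomogeneous 1 ∧ eval w L = 0 ∧ eval v L ≠ 0 := by
  have hab : ∃ a b : Fin 3, v a * w b ≠ v b * w a := by
    by_contra hno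
    push_neg at hno
    obtain ⟨b0, hb0⟩ : ∃ b0, w b0 ≠ 0 := by
      by_contra hc; push_neg at hc; exact hw (funext hc)
    refine h ⟨v b0 / w b0, funext fun a => ?_⟩
    have := hno a b0
    rw [Pi.smul_apply, smul_eq_mul, div_mul_eq_mul_div, div_eq_iff hb0]
    linear_combination -this
  obtain ⟨a, b, hab⟩ := hab
  refine ⟨C (w b) * X a - C (w a) * X b, ?_, by simp [mul_comm], by
    simp only [map_sub, map_mul, eval_C, eval_X]
    intro hcon
    apply hab
    linear_combination hcon⟩
  exact (isHomogeneous_C_mul_X (w b) a).sub (isHomogeneous_C_mul_X (w a) b)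
set_option maxHeartbeats 1000000
set_option synthInstance.maxHeartbeats 400000


lemma finrank_mono' {M : Type*} [AddCommGroup M] [Module ℂ M] {p q : Submodule ℂ M}
    (hpq : p ≤ q) [Module.Finite ℂ q] : finrank ℂ p ≤ finrank ℂ q := by
  rw [← (Submodule.comapSubtypeEquivOfLe hpq).finrank_eq]
  exact Submodule.finrank_le _

lemma aeval_id_eq_eval (v : Fin 3 → ℂ) (p : MvPolynomial (Fin 3) ℂ) : aeval v p = eval v p := by
  rw [aeval_def, Algebra.algebraMap_self]; rfl

/-- Weak Bézout bound: two non-associated irreducible homogeneous forms of degrees `d`, `e`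
have at most `d * e` pairwise non-proportional common nonzero zeros. -/
theorem weak_bezout {f g : MvPolynomial (Fin 3) ℂ} {d e : ℕ}
    (hf : f.IsHomogeneous d) (hg : g.IsHomogeneous e)
    (hfi : Irreducible f) (hgi : Irreducible g) (hass : ¬ Associated f g)
    (S : Finset (Fin 3 → ℂ))
    (hS0 : ∀ v ∈ S, v ≠ 0)
    (hprop : ∀ v ∈ S, ∀ w ∈ S, v ≠ w → ¬ ∃ c : ℂ, c • w = v)
    (hfS : ∀ v ∈ S, eval v f = 0) (hgS : ∀ v ∈ S, eval v g = 0) :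
    S.card ≤ d * e := by
  classical
  rcases Finset.eq_empty_or_nonempty S with rfl | hSne
  · simp
  set m : ℕ := S.card - 1 with hm
  have hN : S.card = m + 1 := by
    have := Finset.card_pos.mpr hSne; omega
  set n : ℕ := m + d + e with hn
  -- the evaluation linear map
  set E : MvPolynomial (Fin 3) ℂ →ₗ[ℂ] (↥S → ℂ) :=
    LinearMap.pi (fun v => (aeval (v : Fin 3 → ℂ)).toLinearMap) with hE
  have hEapply : ∀ (p : MvPolynomial (Fin 3) ℂ) (v : ↥S), E p v = eval ↑v p := by
    intro p v; simp [hE, LinearMap.pi_apply, aeval_id_eq_eval]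
  set ψ : ↥(Vh n) →ₗ[ℂ] (↥S → ℂ) := E.comp (Vh n).subtype with hψ
  -- key: interpolation polynomials
  have key : ∀ v0 : ↥S, ∃ h : MvPolynomial (Fin 3) ℂ,
      h.IsHomogeneous n ∧ eval ↑v0 h ≠ 0 ∧ ∀ w : ↥S, w ≠ v0 → eval ↑w h = 0 := by
    intro v0
    have hLsel : ∀ w ∈ S.erase ↑v0, ∃ L : MvPolynomial (Fin 3) ℂ,
        L.IsHomogeneous 1 ∧ eval w L = 0 ∧ eval ↑v0 L ≠ 0 := by
      intro w hw
      have hwS := Finset.mem_of_mem_erase hw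
      have hne : (↑v0 : Fin 3 → ℂ) ≠ w := (Finset.ne_of_mem_erase hw).symm
      exact exists_sep (hS0 w hwS) (hprop ↑v0 v0.2 w hwS hne)
    choose L hL1 hL2 hL3 using hLsel
    obtain ⟨k0, hk0⟩ : ∃ k0, (↑v0 : Fin 3 → ℂ) k0 ≠ 0 := by
      by_contra hc; push_neg at hc
      exact hS0 ↑v0 v0.2 (funext hc)
    refine ⟨(∏ w ∈ (S.erase ↑v0).attach, L w.1 w.2) * X k0 ^ (d + e), ?_, ?_, ?_⟩
    · have hcard : (S.erase ↑v0).card = m := by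
        rw [Finset.card_erase_of_mem v0.2]
      have hprodhom : (∏ w ∈ (S.erase ↑v0).attach, L w.1 w.2).IsHomogeneous m := by
        have h1 := IsHomogeneous.prod (S.erase ↑v0).attach (fun w => L w.1 w.2) (fun _ => 1)
          (fun w _ => hL1 w.1 w.2)
        rwa [Finset.sum_const, Finset.card_attach, hcard, smul_eq_mul, mul_one] at h1
      have h2 := hprodhom.mul (isHomogeneous_X_pow k0 (d + e))
      rwa [show m + (d + e) = n by omega] at h2
    · rw [map_mul]
      refine mul_ne_zero ?_ (by simp [hk0])
      rw [map_prod]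
      exact Finset.prod_ne_zero_iff.mpr (fun w _ => hL3 w.1 w.2)
    · intro w hw
      have hwe : (↑w : Fin 3 → ℂ) ∈ S.erase ↑v0 :=
        Finset.mem_erase.mpr ⟨fun hc => hw (Subtype.ext hc), w.2⟩
      rw [map_mul, map_prod]
      have : eval ↑w (L ↑w hwe) = 0 := hL2 ↑w hwe
      rw [Finset.prod_eq_zero (Finset.mem_attach _ ⟨↑w, hwe⟩) this, zero_mul]
  choose hfun hhom hnz hzero using key
  -- surjectivity of ψ
  have hsurj : Function.Surjective ψ := by
    intro w
    set x : MvPolynomial (Fin 3) ℂ :=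
      ∑ v0 : ↥S, (w v0 / eval ↑v0 (hfun v0)) • hfun v0 with hx
    have hxmem : x ∈ Vh n := by
      refine Submodule.sum_mem _ (fun v0 _ => Submodule.smul_mem _ _ ?_)
      exact (mem_homogeneousSubmodule _ _).mpr (hhom v0)
    refine ⟨⟨x, hxmem⟩, ?_⟩
    funext v
    have : ψ ⟨x, hxmem⟩ v = eval ↑v x := by
      simp [hψ, LinearMap.comp_apply, hEapply]
    rw [this, hx, map_sum]
    rw [Finset.sum_eq_single v (fun v0 _ hv0 => by
        rw [smul_eval, hzero v0 v (Ne.symm hv0), mul_zero])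
      (fun hc => absurd (Finset.mem_univ v) hc)]
    rw [smul_eval, div_mul_cancel₀ _ (hnz v)]
  -- the ideal-piece submodules
  have hfinj : Function.Injective (LinearMap.mulLeft ℂ f) := fun a b hab =>
    mul_left_cancel₀ hfi.ne_zero (by simpa only [LinearMap.mulLeft_apply] using hab)
  have hfginj : Function.Injective (LinearMap.mulLeft ℂ (f * g)) := fun a b hab =>
    mul_left_cancel₀ (mul_ne_zero hfi.ne_zero hgi.ne_zero)
      (by simpa only [LinearMap.mulLeft_apply] using hab)
  have hginj : Function.Injective (LinearMap.mulLeft ℂ g) := fun a b hab =>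
    mul_left_cancel₀ hgi.ne_zero (by simpa only [LinearMap.mulLeft_apply] using hab)
  set W1 : Submodule ℂ (MvPolynomial (Fin 3) ℂ) := (Vh (m + e)).map (LinearMap.mulLeft ℂ f)
    with hW1
  set W2 : Submodule ℂ (MvPolynomial (Fin 3) ℂ) := (Vh (m + d)).map (LinearMap.mulLeft ℂ g)
    with hW2
  set W3 : Submodule ℂ (MvPolynomial (Fin 3) ℂ) := (Vh m).map (LinearMap.mulLeft ℂ (f * g))
    with hW3
  haveI : FiniteDimensional ℂ W1 :=
    Module.Finite.equiv (Submodule.equivMapOfInjective _ hfinj (Vh (m + e)))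
  haveI : FiniteDimensional ℂ W2 :=
    Module.Finite.equiv (Submodule.equivMapOfInjective _ hginj (Vh (m + d)))
  haveI : FiniteDimensional ℂ W3 :=
    Module.Finite.equiv (Submodule.equivMapOfInjective _ hfginj (Vh m))
  have hrank1 : finrank ℂ W1 = (m + e + 2).choose 2 := by
    rw [← (Submodule.equivMapOfInjective _ hfinj (Vh (m + e))).finrank_eq]
    exact finrank_Vh (m + e)
  have hrank2 : finrank ℂ W2 = (m + d + 2).choose 2 := by
    rw [← (Submodule.equivMapOfInjective _ hginj (Vh (m + d))).finrank_eq]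
    exact finrank_Vh (m + d)
  have hrank3 : finrank ℂ W3 = (m + 2).choose 2 := by
    rw [← (Submodule.equivMapOfInjective _ hfginj (Vh m)).finrank_eq]
    exact finrank_Vh m
  -- W1 ⊓ W2 ≤ W3
  have hW12 : W1 ⊓ W2 ≤ W3 := by
    rintro h ⟨⟨a, ha, rfl⟩, ⟨b, hb, hgb⟩⟩
    simp only [LinearMap.mulLeft_apply] at hgb ⊢
    have hahom : a.IsHomogeneous (m + e) := (mem_homogeneousSubmodule _ _).mp ha
    have hgprime : Prime g := UniqueFactorizationMonoid.irreducible_iff_prime.mp hgi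
    have hgdvd : g ∣ f * a := ⟨b, hgb.symm⟩
    have hgnf : ¬ g ∣ f := fun hdvd => hass ((hgi.associated_of_dvd hfi hdvd).symm)
    have hgda : g ∣ a := (hgprime.2.2 f a hgdvd).resolve_left hgnf
    obtain ⟨c, rfl⟩ := hgda
    have hfa : ((f * g) * c).IsHomogeneous ((d + e) + m) := by
      have : (f * (g * c)).IsHomogeneous (d + (m + e)) := hf.mul hahom
      have heq : d + (m + e) = (d + e) + m := by omega
      rw [heq] at this
      rwa [show (f * g) * c = f * (g * c) by ring]
    obtain ⟨c', hc'hom, hc'eq⟩ :=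
      exists_homogeneous_cofactor (hf.mul hg) (by omega : d + e ≤ (d + e) + m) hfa
    have hc'm : c'.IsHomogeneous m := by
      have : (d + e) + m - (d + e) = m := by omega
      rwa [this] at hc'hom
    refine ⟨c', (mem_homogeneousSubmodule _ _).mpr hc'm, ?_⟩
    simp only [LinearMap.mulLeft_apply]
    rw [hc'eq]; ring
  -- W1 ⊔ W2 ≤ Vh n, and lies in the kernel of evaluation
  have hsub1 : W1 ≤ Vh n := by
    rintro h ⟨a, ha, rfl⟩
    have : (f * a).IsHomogeneous (d + (m + e)) :=
      hf.mul ((mem_homogeneousSubmodule _ _).mp ha)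
    have heq : d + (m + e) = n := by omega
    rw [heq] at this
    exact (mem_homogeneousSubmodule _ _).mpr this
  have hsub2 : W2 ≤ Vh n := by
    rintro h ⟨b, hb, rfl⟩
    have : (g * b).IsHomogeneous (e + (m + d)) :=
      hg.mul ((mem_homogeneousSubmodule _ _).mp hb)
    have heq : e + (m + d) = n := by omega
    rw [heq] at this
    exact (mem_homogeneousSubmodule _ _).mpr this
  have hsup_le : W1 ⊔ W2 ≤ Vh n := sup_le hsub1 hsub2
  set W' : Submodule ℂ ↥(Vh n) := (W1 ⊔ W2).comap (Vh n).subtype with hW'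
  have hWker : W' ≤ LinearMap.ker ψ := by
    intro x hx
    simp only [hW', Submodule.mem_comap] at hx
    rw [LinearMap.mem_ker]
    funext v
    rw [hψ, LinearMap.comp_apply, hEapply, Submodule.subtype_apply]
    obtain ⟨y, hy, z, hz, hyz⟩ := Submodule.mem_sup.mp hx
    obtain ⟨a, _, rfl⟩ := hy
    obtain ⟨b, _, rfl⟩ := hz
    simp only [Submodule.coe_subtype] at hyz
    rw [← hyz]
    simp only [LinearMap.mulLeft_apply, map_add, map_mul,
      hfS ↑v v.2, hgS ↑v v.2, zero_mul, add_zero, Pi.zero_apply]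
  have hW'rank : finrank ℂ W' = finrank ℂ ↥(W1 ⊔ W2) :=
    (Submodule.comapSubtypeEquivOfLe hsup_le).finrank_eq
  -- assemble
  have hrn : finrank ℂ ↥(LinearMap.range ψ) + finrank ℂ ↥(LinearMap.ker ψ)
      = finrank ℂ ↥(Vh n) := LinearMap.finrank_range_add_finrank_ker ψ
  have hrange : finrank ℂ ↥(LinearMap.range ψ) = S.card := by
    rw [LinearMap.range_eq_top.mpr hsurj, finrank_top, finrank_pi, Fintype.card_coe]
  have hkerge : finrank ℂ ↥(W1 ⊔ W2) ≤ finrank ℂ ↥(LinearMap.ker ψ) := by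
    rw [← hW'rank]
    exact finrank_mono' hWker
  have hsupinf : finrank ℂ ↥(W1 ⊔ W2) + finrank ℂ ↥(W1 ⊓ W2)
      = finrank ℂ W1 + finrank ℂ W2 := Submodule.finrank_sup_add_finrank_inf_eq W1 W2
  have hinfle : finrank ℂ ↥(W1 ⊓ W2) ≤ finrank ℂ W3 := finrank_mono' hW12
  have hvn : finrank ℂ ↥(Vh n) = (m + d + e + 2).choose 2 := finrank_Vh n
  have htid := Tid m d e
  omega

lemma eval_houghPoly {t : ℕ} (F : MvPolynomial (Fin 2) (MvPolynomial (Fin t) ℝ))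
    (q : Fin 2 → ℝ) (mu : Fin t → ℝ) :
    eval mu (houghPoly F q) = eval q (fLam F mu) := by
  rw [houghPoly, fLam, eval_map, eval₂_comp_left (eval mu) (RingHom.id _) (fun i => C (q i)) F]
  simp only [RingHom.comp_id, Function.comp_def, eval_C]

/-- The third-coordinate-1 lift of an affine complex point. -/
def vC (q : Fin 2 → ℂ) : Fin 3 → ℂ := ![q 0, q 1, 1]

lemma vC_ne_zero (q : Fin 2 → ℂ) : vC q ≠ 0 := by
  intro h
  have := congrFun h 2
  simp [vC] at this

lemma projPoly_isHomogeneous {g : MvPolynomial (Fin 2) ℝ} {d : ℕ} (hdeg : g.totalDegree ≤ d) :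
    (projPoly d g).IsHomogeneous d := by
  apply IsHomogeneous.sum
  intro m hm
  apply isHomogeneous_monomial
  have hle : m 0 + m 1 ≤ d := by
    have h1 := MvPolynomial.le_totalDegree hm
    have h2 : (m.sum fun _ e => e) = m 0 + m 1 := by
      rw [show (m.sum fun _ e => e) = m.degree from rfl, finsuppDegree_eq_sum,
        Fin.sum_univ_two]
    omega
  rw [finsuppDegree_eq_sum, Fin.sum_univ_three]
  simp only [Finsupp.coe_equivFunOnFinite_symm, Matrix.cons_val_zero,
    Matrix.cons_val_one, Matrix.head_cons]
  have : (![m 0, m 1, d - (m 0 + m 1)] : Fin 3 → ℕ) 2 = d - (m 0 + m 1) := rfl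
  rw [this]
  omega

lemma eval_vC_projPoly (d : ℕ) (g : MvPolynomial (Fin 2) ℝ) (q : Fin 2 → ℂ) :
    eval (vC q) (projPoly d g) = aeval q g := by
  rw [projPoly, map_sum]
  conv_rhs => rw [g.as_sum, map_sum]
  refine Finset.sum_congr rfl fun m _ => ?_
  rw [eval_monomial, aeval_monomial]
  rw [Finsupp.prod_fintype _ _ (fun i => pow_zero _), Finsupp.prod_fintype _ _ (fun i => pow_zero _)]
  rw [Fin.prod_univ_three, Fin.prod_univ_two]
  simp only [Finsupp.coe_equivFunOnFinite_symm, vC]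
  have h0 : (![q 0, q 1, 1] : Fin 3 → ℂ) 0 = q 0 := rfl
  have h1 : (![q 0, q 1, 1] : Fin 3 → ℂ) 1 = q 1 := rfl
  have h2 : (![q 0, q 1, 1] : Fin 3 → ℂ) 2 = 1 := rfl
  have e0 : (![m 0, m 1, d - (m 0 + m 1)] : Fin 3 → ℕ) 0 = m 0 := rfl
  have e1 : (![m 0, m 1, d - (m 0 + m 1)] : Fin 3 → ℕ) 1 = m 1 := rfl
  have e2 : (![m 0, m 1, d - (m 0 + m 1)] : Fin 3 → ℕ) 2 = d - (m 0 + m 1) := rfl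
  rw [h0, h1, h2, e0, e1, e2, one_pow, mul_one]
  rw [show (algebraMap ℝ ℂ) (coeff m g) = ((coeff m g : ℝ) : ℂ) from rfl]

lemma aeval_ofReal (g : MvPolynomial (Fin 2) ℝ) (x : Fin 2 → ℝ) :
    aeval (fun i => ((x i : ℝ) : ℂ)) g = ((eval x g : ℝ) : ℂ) := by
  have h := eval₂_comp_left (algebraMap ℝ ℂ) (RingHom.id ℝ) x g
  rw [RingHom.comp_id] at h
  have hx : (⇑(algebraMap ℝ ℂ) ∘ x) = fun i => ((x i : ℝ) : ℂ) := by
    funext i; simp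
  rw [hx] at h
  rw [aeval_def, ← h]
  rw [show (eval x) g = eval₂ (RingHom.id ℝ) x g from rfl]
  simp [Complex.coe_algebraMap]

/-- Membership in the base locus can be tested on any nonzero representative. -/
lemma mem_baseLocus_iff {t : ℕ} {F : MvPolynomial (Fin 2) (MvPolynomial (Fin t) ℝ)}
    {U : Set (Fin t → ℝ)} {d : ℕ} (hstand : StandingAssumptions F U d)
    (v : Fin 3 → ℂ) (hv : v ≠ 0) :
    Projectivization.mk ℂ v hv ∈ BaseLocus F U d ↔
      ∀ lam ∈ U, eval v (projPoly d (fLam F lam)) = 0 := by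
  set P := Projectivization.mk ℂ v hv with hP
  obtain ⟨a, ha⟩ : ∃ a : ℂ, a • v = P.rep :=
    (Projectivization.mk_eq_mk_iff' ℂ P.rep v P.rep_nonzero hv).mp (by rw [hP]; exact P.mk_rep)
  have ha0 : a ≠ 0 := by
    intro h; apply P.rep_nonzero; rw [← ha, h, zero_smul]
  constructor
  · intro hmem lam hlam
    have hhom : (projPoly d (fLam F lam)).IsHomogeneous d :=
      projPoly_isHomogeneous (le_of_eq (hstand lam hlam).2.1)
    have := hmem lam hlam
    rw [← ha, eval_smul_of_isHomogeneous hhom] at this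
    exact (mul_eq_zero.mp this).resolve_left (pow_ne_zero _ ha0)
  · intro hall lam hlam
    have hhom : (projPoly d (fLam F lam)).IsHomogeneous d :=
      projPoly_isHomogeneous (le_of_eq (hstand lam hlam).2.1)
    rw [← ha, eval_smul_of_isHomogeneous hhom, hall lam hlam, mul_zero]

/-- If the projectivized polynomials are associated, the real curves coincide. -/
lemma curve_eq_of_associated {t : ℕ} {F : MvPolynomial (Fin 2) (MvPolynomial (Fin t) ℝ)}
    {d : ℕ} (lam mu : Fin t → ℝ)
    (hass : Associated (projPoly d (fLam F lam)) (projPoly d (fLam F mu))) :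
    Curve F lam = Curve F mu := by
  have key : ∀ (a b : Fin t → ℝ),
      (projPoly d (fLam F a)) ∣ (projPoly d (fLam F b)) →
      Curve F a ⊆ Curve F b := by
    intro a b hdvd x hx
    obtain ⟨h, hh⟩ := hdvd
    have hxa : eval x (fLam F a) = 0 := hx
    have h1 : eval (vC fun i => ((x i : ℝ) : ℂ)) (projPoly d (fLam F a)) = 0 := by
      rw [eval_vC_projPoly, aeval_ofReal, hxa, Complex.ofReal_zero]
    have h2 : eval (vC fun i => ((x i : ℝ) : ℂ)) (projPoly d (fLam F b)) = 0 := by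
      rw [hh, map_mul, h1, zero_mul]
    rw [eval_vC_projPoly, aeval_ofReal, Complex.ofReal_eq_zero] at h2
    exact h2
  exact Set.Subset.antisymm (key lam mu hass.dvd) (key mu lam hass.symm.dvd)


/-- Proposition, part 3. With `ν_opt := d² − #B(ℂ) + 1` and `ν_opt` distinct
real points `p_j ∈ C_λ \ B_aff`: if the family `𝓕` is Hough regular, then
`⋂_j Γ_{p_j}(𝓕) ∩ U = {λ}`. -/
theorem statement4 (t d : ℕ) (hd : 0 < d)
    (F : MvPolynomial (Fin 2) (MvPolynomial (Fin t) ℝ)) (U : Set (Fin t → ℝ))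
    (hstand : StandingAssumptions F U d)
    (hBfin : (BaseLocus F U d).Finite)
    (lam : Fin t → ℝ) (hlam : lam ∈ U)
    (p : Fin (d ^ 2 - (BaseLocus F U d).ncard + 1) → (Fin 2 → ℝ))
    (hinj : Function.Injective p)
    (hp : ∀ j, p j ∈ Curve F lam ∧ (fun i => ((p j i : ℝ) : ℂ)) ∉ Baff F U)
    (hreg : HoughRegular F U) :
    (⋂ j, Gamma F (p j)) ∩ U = {lam} := by

  classical
  apply Set.eq_singleton_iff_unique_mem.mpr
  constructor
  · refine ⟨Set.mem_iInter.mpr fun j => ?_, hlam⟩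
    show eval lam (houghPoly F (p j)) = 0
    rw [eval_houghPoly]
    exact (hp j).1
  · rintro mu ⟨hmuG, hmuU⟩
    by_contra hne
    -- each p j lies on the curve C_mu
    have hmucurve : ∀ j, eval (p j) (fLam F mu) = 0 := by
      intro j
      have := Set.mem_iInter.mp hmuG j
      rwa [Gamma, Set.mem_setOf_eq, eval_houghPoly] at this
    obtain ⟨_, hdlam, _, hirrlam, _⟩ := hstand lam hlam
    obtain ⟨_, hdmu, _, hirrmu, _⟩ := hstand mu hmuU
    have hhomlam : (projPoly d (fLam F lam)).IsHomogeneous d :=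
      projPoly_isHomogeneous (le_of_eq hdlam)
    have hhommu : (projPoly d (fLam F mu)).IsHomogeneous d :=
      projPoly_isHomogeneous (le_of_eq hdmu)
    -- not associated
    have hnass : ¬ Associated (projPoly d (fLam F lam)) (projPoly d (fLam F mu)) := by
      intro hass
      exact hne (hreg lam hlam mu hmuU (curve_eq_of_associated lam mu hass)).symm
    -- lifted points are not in the base locus
    have hmkp : ∀ j, Projectivization.mk ℂ (vC fun i => ((p j i : ℝ) : ℂ))
        (vC_ne_zero _) ∉ BaseLocus F U d := by
      intro j hmem
      apply (hp j).2
      intro lam' hlam'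
      have := (mem_baseLocus_iff hstand _ (vC_ne_zero _)).mp hmem lam' hlam'
      rwa [eval_vC_projPoly] at this
    -- the finset of common zeros
    set q : Fin (d ^ 2 - (BaseLocus F U d).ncard + 1) → (Fin 3 → ℂ) :=
      fun j => vC fun i => ((p j i : ℝ) : ℂ) with hq
    have hqinj : Function.Injective q := by
      intro j k hjk
      apply hinj
      funext i
      have h0 := congrFun hjk 0
      have h1 := congrFun hjk 1
      simp only [hq, vC, Matrix.cons_val_zero, Matrix.cons_val_one, Matrix.head_cons,
        Complex.ofReal_inj] at h0 h1
      fin_cases i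
      · exact h0
      · exact h1
    set SB : Finset (Fin 3 → ℂ) := hBfin.toFinset.image Projectivization.rep with hSB
    set SP : Finset (Fin 3 → ℂ) := Finset.univ.image q with hSP
    have hrepinj : Function.Injective (Projectivization.rep : Projectivization ℂ (Fin 3 → ℂ) → _) := by
      intro P Q h
      rw [← P.mk_rep, ← Q.mk_rep]
      simp only [h]
    -- q j is never a representative of a base point
    have hqnotB : ∀ j (P : Projectivization ℂ (Fin 3 → ℂ)), P ∈ BaseLocus F U d →
        ¬ ∃ c : ℂ, c • q j = P.rep := by
      intro j P hPmem ⟨c, hc⟩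
      apply hmkp j
      have : Projectivization.mk ℂ (q j) (vC_ne_zero _) = P :=
        ((Projectivization.mk_eq_mk_iff' ℂ (q j) P.rep (vC_ne_zero _) P.rep_nonzero).mpr
          ⟨c⁻¹, by
            rw [← hc, smul_smul, inv_mul_cancel₀, one_smul]
            intro h0
            apply P.rep_nonzero
            rw [← hc, h0, zero_smul]⟩).trans P.mk_rep
      rwa [this]
    have hdisj : Disjoint SB SP := by
      rw [Finset.disjoint_left]
      rintro v hvB hvP
      obtain ⟨P, hPmem, rfl⟩ := Finset.mem_image.mp hvB
      obtain ⟨j, _, hjv⟩ := Finset.mem_image.mp hvP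
      rw [Set.Finite.mem_toFinset] at hPmem
      exact hqnotB j P hPmem ⟨1, by rw [hjv, one_smul]⟩
    set S : Finset (Fin 3 → ℂ) := SB ∪ SP with hS
    have hScard : S.card = (BaseLocus F U d).ncard + (d ^ 2 - (BaseLocus F U d).ncard + 1) := by
      rw [hS, Finset.card_union_of_disjoint hdisj, hSB, hSP,
        Finset.card_image_of_injective _ hrepinj, Finset.card_image_of_injective _ hqinj,
        Finset.card_univ, Fintype.card_fin, ← Set.ncard_eq_toFinset_card _ hBfin]
    -- verify the hypotheses of weak Bézout
    have hS0 : ∀ v ∈ S, v ≠ 0 := by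
      intro v hv
      rcases Finset.mem_union.mp hv with h | h
      · obtain ⟨P, _, rfl⟩ := Finset.mem_image.mp h
        exact P.rep_nonzero
      · obtain ⟨j, _, rfl⟩ := Finset.mem_image.mp h
        exact vC_ne_zero _
    have hprop : ∀ v ∈ S, ∀ w ∈ S, v ≠ w → ¬ ∃ c : ℂ, c • w = v := by
      rintro v hv w hw hvw ⟨c, hc⟩
      have hc0 : c ≠ 0 := by
        intro h0
        apply hS0 v hv
        rw [← hc, h0, zero_smul]
      rcases Finset.mem_union.mp hv with h1 | h1 <;> rcases Finset.mem_union.mp hw with h2 | h2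
      · -- both representatives of base points
        obtain ⟨P, _, rfl⟩ := Finset.mem_image.mp h1
        obtain ⟨Q, _, rfl⟩ := Finset.mem_image.mp h2
        apply hvw
        have : P = Q :=
          (P.mk_rep.symm.trans
            ((Projectivization.mk_eq_mk_iff' ℂ P.rep Q.rep P.rep_nonzero Q.rep_nonzero).mpr
              ⟨c, hc⟩)).trans Q.mk_rep
        rw [this]
      · -- v = rep P, w = q j
        obtain ⟨P, hPmem, rfl⟩ := Finset.mem_image.mp h1
        obtain ⟨j, _, rfl⟩ := Finset.mem_image.mp h2
        rw [Set.Finite.mem_toFinset] at hPmem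
        exact hqnotB j P hPmem ⟨c, hc⟩
      · -- v = q j, w = rep P
        obtain ⟨j, _, rfl⟩ := Finset.mem_image.mp h1
        obtain ⟨P, hPmem, rfl⟩ := Finset.mem_image.mp h2
        rw [Set.Finite.mem_toFinset] at hPmem
        refine hqnotB j P hPmem ⟨c⁻¹, ?_⟩
        rw [← hc, smul_smul, inv_mul_cancel₀ hc0, one_smul]
      · -- both lifted points
        obtain ⟨j, _, rfl⟩ := Finset.mem_image.mp h1
        obtain ⟨k, _, rfl⟩ := Finset.mem_image.mp h2
        have h2c := congrFun hc 2
        have ek : q k 2 = 1 := rfl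
        have ej : q j 2 = 1 := rfl
        rw [Pi.smul_apply, ek, ej, smul_eq_mul, mul_one] at h2c
        apply hvw
        rw [← hc, h2c, one_smul]
    have hcommon : ∀ (nu : Fin t → ℝ), nu ∈ U → (∀ j, eval (p j) (fLam F nu) = 0) →
        ∀ v ∈ S, eval v (projPoly d (fLam F nu)) = 0 := by
      intro nu hnu hcv v hv
      rcases Finset.mem_union.mp hv with h | h
      · obtain ⟨P, hPmem, rfl⟩ := Finset.mem_image.mp h
        rw [Set.Finite.mem_toFinset] at hPmem
        exact hPmem nu hnu
      · obtain ⟨j, _, rfl⟩ := Finset.mem_image.mp h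
        rw [hq, eval_vC_projPoly, aeval_ofReal, hcv j, Complex.ofReal_zero]
    have hbez := weak_bezout hhomlam hhommu hirrlam hirrmu hnass S hS0 hprop
      (hcommon lam hlam (fun j => (hp j).1))
      (hcommon mu hmuU hmucurve)
    have hsq : d * d = d ^ 2 := (pow_two d).symm
    omega

end
end

section
/- Let K = ℝ or ℂ and let f₁,…,f_ν ∈ K[Λ₁,…,Λ_t] be nonzero polynomials all of the same total degree h, with homogenizations f₁^hom,…,f_ν^hom ∈ K[Λ₀,Λ₁,…,Λ_t] (homogenized with respect to a new variable Λ₀). Let 𝒮 be the union of the supports of the f_j^hom, with s := #𝒮, and let M ∈ Mat_{ν×s}(K) be the matrix whose j-th row lists the coefficients of f_j^hom on the monomials of 𝒮 (in a fixed order). Then the smallest positive integer k ≤ ν for which there exist indices 1 ≤ j₁ < ⋯ < j_k ≤ ν with (f₁^hom,…,f_ν^hom) = (f_{j₁}^hom,…,f_{j_k}^hom) as ideals of K[Λ₀,Λ₁,…,Λ_t] is equal to the rank of M. -/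
open MvPolynomial

noncomputable section

/-- The homogenization `f^hom ∈ K[Λ₀,Λ₁,…,Λ_t]` of a polynomial `f ∈ K[Λ₁,…,Λ_t]` of total
degree `h`, with respect to the new variable `Λ₀` (encoded as `none` in `Option (Fin t)`):
each monomial of `f` is multiplied by the power of `Λ₀` raising its degree to `h`. -/
def homogenize {K : Type*} [CommSemiring K] {t : ℕ} (h : ℕ) (f : MvPolynomial (Fin t) K) :
    MvPolynomial (Option (Fin t)) K :=
  f.support.sum fun m =>
    MvPolynomial.monomial
      (Finsupp.equivFunOnFinite.symm fun o => o.elim (h - m.sum fun _ n => n) m)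
      (f.coeff m)

namespace Statement5Aux

/-- The embedding of exponents used in `homogenize`. -/
def emb {t : ℕ} (h : ℕ) (m : Fin t →₀ ℕ) : Option (Fin t) →₀ ℕ :=
  Finsupp.equivFunOnFinite.symm fun o => o.elim (h - m.sum fun _ n => n) m

lemma emb_inj {t : ℕ} (h : ℕ) {m m' : Fin t →₀ ℕ} (he : emb h m = emb h m') : m = m' := by
  ext i
  have := congrArg (fun d : (Option (Fin t)) →₀ ℕ => d (some i)) he
  simpa [emb] using this

lemma degree_eq_sum_univ {α : Type*} [Fintype α] (d : α →₀ ℕ) :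
    d.degree = ∑ i, d i := by
  rw [Finsupp.degree]
  exact Finset.sum_subset (Finset.subset_univ _)
    (fun i _ hi => Finsupp.notMem_support_iff.mp hi)

lemma degree_emb {t : ℕ} {h : ℕ} {m : Fin t →₀ ℕ} (hd : (m.sum fun _ n => n) ≤ h) :
    (emb h m).degree = h := by
  rw [degree_eq_sum_univ]
  rw [Fintype.sum_option]
  have h1 : (emb h m) none = h - m.sum fun _ n => n := by simp [emb]
  have h2 : ∀ i, (emb h m) (some i) = m i := by intro i; simp [emb]
  simp only [h1, h2]
  have h3 : (m.sum fun _ n => n) = ∑ i, m i := Finsupp.sum_fintype _ _ (fun _ => rfl)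
  omega

lemma coeff_homogenize {K : Type*} [CommSemiring K] {t : ℕ} (h : ℕ)
    (f : MvPolynomial (Fin t) K) (m : Fin t →₀ ℕ) :
    (homogenize h f).coeff (emb h m) = f.coeff m := by
  have hrw : homogenize h f = f.support.sum fun m' => MvPolynomial.monomial (emb h m') (f.coeff m') := rfl
  rw [hrw, MvPolynomial.coeff_sum]
  rw [Finset.sum_eq_single m
    (fun b _ hb => by
      rw [coeff_monomial, if_neg]
      exact fun hc => hb (emb_inj h hc))
    (fun hm => by
      rw [coeff_monomial, if_pos rfl]
      exact MvPolynomial.notMem_support_iff.mp hm)]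
  rw [coeff_monomial, if_pos rfl]

lemma homogenize_ne_zero {K : Type*} [CommSemiring K] {t : ℕ} (h : ℕ)
    {f : MvPolynomial (Fin t) K} (hf : f ≠ 0) : homogenize h f ≠ 0 := by
  obtain ⟨m, hm⟩ := MvPolynomial.ne_zero_iff.mp hf
  intro hc
  apply hm
  have := coeff_homogenize h f m
  rw [hc] at this
  simpa using this.symm

lemma homogenize_isHomogeneous {K : Type*} [CommSemiring K] {t : ℕ} {h : ℕ}
    {f : MvPolynomial (Fin t) K} (hf : f.totalDegree ≤ h) :
    (homogenize h f).IsHomogeneous h := by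
  apply MvPolynomial.IsHomogeneous.sum
  intro m hm
  exact isHomogeneous_monomial _ (degree_emb (le_trans (le_totalDegree hm) hf))

section HomogSpan

variable {K : Type*} [Field K] {σ : Type*}

lemma coeff_eq_zero_of_lt {h : ℕ} {x : MvPolynomial σ K}
    (hx : ∀ d, d < h → homogeneousComponent d x = 0) {b : σ →₀ ℕ} (hb : b.degree < h) :
    MvPolynomial.coeff b x = 0 := by
  have h1 := hx b.degree hb
  have h2 : MvPolynomial.coeff b (homogeneousComponent b.degree x) = MvPolynomial.coeff b x := by
    rw [coeff_homogeneousComponent, if_pos rfl]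
  rw [h1] at h2
  simpa using h2.symm

lemma degree_add' (a b : σ →₀ ℕ) : (a + b).degree = a.degree + b.degree := by
  simp only [Finsupp.degree_eq_weight_one]
  exact map_add _ _ _

lemma hc_lt_mul {h : ℕ} {x r : MvPolynomial σ K}
    (hx : ∀ d, d < h → homogeneousComponent d x = 0) :
    ∀ d, d < h → homogeneousComponent d (r * x) = 0 := by
  classical
  intro d hd
  ext m
  rw [coeff_homogeneousComponent, MvPolynomial.coeff_zero]
  split_ifs with hm
  · rw [MvPolynomial.coeff_mul]
    apply Finset.sum_eq_zero
    rintro ⟨a, b⟩ hab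
    rw [Finset.HasAntidiagonal.mem_antidiagonal] at hab
    have hsum : a.degree + b.degree = m.degree := by rw [← hab, degree_add']
    have hblt : b.degree < h := by omega
    rw [coeff_eq_zero_of_lt hx hblt, mul_zero]
  · rfl

lemma hc_h_mul {h : ℕ} {x r : MvPolynomial σ K}
    (hx : ∀ d, d < h → homogeneousComponent d x = 0) :
    homogeneousComponent h (r * x) =
      MvPolynomial.C (MvPolynomial.coeff 0 r) * homogeneousComponent h x := by
  classical
  ext m
  rw [coeff_homogeneousComponent, MvPolynomial.coeff_C_mul, coeff_homogeneousComponent]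
  split_ifs with hm
  · rw [MvPolynomial.coeff_mul]
    rw [Finset.sum_eq_single_of_mem ((0 : σ →₀ ℕ), m)
      (Finset.HasAntidiagonal.mem_antidiagonal.mpr (zero_add m))
      (by
        rintro ⟨a, b⟩ hab hne
        rw [Finset.HasAntidiagonal.mem_antidiagonal] at hab
        by_cases ha : a = 0
        · subst ha
          rw [zero_add] at hab
          subst hab
          exact absurd rfl hne
        · have hapos : 0 < a.degree :=
            Nat.pos_of_ne_zero (fun h0 => ha ((Finsupp.degree_eq_zero_iff a).mp h0))
          have hsum : a.degree + b.degree = m.degree := by rw [← hab, degree_add']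
          have hblt : b.degree < h := by omega
          rw [coeff_eq_zero_of_lt hx hblt, mul_zero])]
  · rw [mul_zero]

lemma mem_span_of_mem_idealSpan {h : ℕ} {s : Set (MvPolynomial σ K)}
    (hs : ∀ q ∈ s, q.IsHomogeneous h) {p : MvPolynomial σ K}
    (hp : p.IsHomogeneous h) (hmem : p ∈ Ideal.span s) :
    p ∈ Submodule.span K s := by
  have key : (∀ d, d < h → homogeneousComponent d p = 0) ∧
      homogeneousComponent h p ∈ Submodule.span K s := by
    refine Submodule.span_induction ?_ ?_ ?_ ?_ hmem
    · intro q hq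
      have hqmem : q ∈ homogeneousSubmodule σ K h :=
        (mem_homogeneousSubmodule _ _).mpr (hs q hq)
      constructor
      · intro d hd
        rw [homogeneousComponent_of_mem hqmem, if_neg hd.ne]
      · rw [homogeneousComponent_of_mem hqmem, if_pos rfl]
        exact Submodule.subset_span hq
    · exact ⟨fun d _ => map_zero _, by rw [map_zero]; exact Submodule.zero_mem _⟩
    · rintro a b _ _ ⟨ha1, ha2⟩ ⟨hb1, hb2⟩
      exact ⟨fun d hd => by rw [map_add, ha1 d hd, hb1 d hd, add_zero],
        by rw [map_add]; exact Submodule.add_mem _ ha2 hb2⟩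
    · rintro r x _ ⟨hx1, hx2⟩
      rw [smul_eq_mul]
      refine ⟨hc_lt_mul hx1, ?_⟩
      rw [hc_h_mul hx1, MvPolynomial.C_mul']
      exact Submodule.smul_mem _ _ hx2
  have hpmem : p ∈ homogeneousSubmodule σ K h := (mem_homogeneousSubmodule _ _).mpr hp
  have := key.2
  rwa [homogeneousComponent_of_mem hpmem, if_pos rfl] at this

lemma span_le_idealSpan (s : Set (MvPolynomial σ K)) {p : MvPolynomial σ K}
    (hp : p ∈ Submodule.span K s) : p ∈ Ideal.span s := by
  have hle : Submodule.span K s ≤ (Ideal.span s).restrictScalars K :=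
    Submodule.span_le.mpr Ideal.subset_span
  exact hle hp

end HomogSpan

end Statement5Aux

open Statement5Aux

/-- For nonzero polynomials `f₁,…,f_ν ∈ K[Λ₁,…,Λ_t]` of the same total
degree `h`, the smallest positive integer `k` for which some `k` of the homogenizations
generate the ideal of all of them equals the rank of the associated HT-matrix `M`. -/
theorem statement5 {K : Type*} [Field K] (t ν h : ℕ) (hν : 0 < ν)
    (f : Fin ν → MvPolynomial (Fin t) K)
    (hne : ∀ j, f j ≠ 0) (hdeg : ∀ j, (f j).totalDegree = h)
    -- the generic ordered support 𝒮 (union of the supports of the homogenizations)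
    (S : Finset ((Option (Fin t)) →₀ ℕ))
    (hS : ∀ m : (Option (Fin t)) →₀ ℕ,
      m ∈ S ↔ ∃ j, m ∈ (homogenize h (f j)).support)
    -- the HT-matrix: rows are the coefficient vectors of the homogenizations on 𝒮
    (M : Matrix (Fin ν) {m // m ∈ S} K)
    (hM : ∀ j (s : {m // m ∈ S}), M j s = (homogenize h (f j)).coeff s.val) :
    IsLeast {k : ℕ | 0 < k ∧ ∃ J : Finset (Fin ν), J.card = k ∧
        Ideal.span (Set.range fun j => homogenize h (f j)) =
          Ideal.span ((fun j => homogenize h (f j)) '' ↑J)}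
      M.rank := by
  classical
  set g : Fin ν → MvPolynomial (Option (Fin t)) K := fun j => homogenize h (f j) with hg
  have ghom : ∀ j, (g j).IsHomogeneous h := fun j =>
    homogenize_isHomogeneous (le_of_eq (hdeg j))
  have gsupp : ∀ j, (g j).support ⊆ S := fun j m hm => (hS m).mpr ⟨j, hm⟩
  -- the coefficient-extraction linear map
  let L : MvPolynomial (Option (Fin t)) K →ₗ[K] ({m // m ∈ S} → K) :=
    { toFun := fun p s => p.coeff s.1
      map_add' := fun p q => by funext s; simp [MvPolynomial.coeff_add]
      map_smul' := fun c p => by funext s; simp [MvPolynomial.coeff_smul] }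
  -- the reconstruction linear map
  let Rm : ({m // m ∈ S} → K) →ₗ[K] MvPolynomial (Option (Fin t)) K :=
    { toFun := fun v => ∑ s ∈ S.attach, MvPolynomial.monomial s.1 (v s)
      map_add' := fun v w => by
        simp only [Pi.add_apply, map_add]
        rw [Finset.sum_add_distrib]
      map_smul' := fun c v => by
        simp only [Pi.smul_apply, smul_eq_mul, RingHom.id_apply]
        rw [Finset.smul_sum]
        congr 1
        funext s
        rw [← smul_eq_mul, map_smul] }
  have hLg : ∀ j, L (g j) = M j := by
    intro j
    funext s
    exact (hM j s).symm
  have hRM : ∀ j, Rm (M j) = g j := by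
    intro j
    show (∑ s ∈ S.attach, MvPolynomial.monomial s.1 (M j s)) = g j
    have h1 : ∀ s : {m // m ∈ S}, MvPolynomial.monomial s.1 (M j s)
        = MvPolynomial.monomial s.1 ((g j).coeff s.1) := by
      intro s; rw [hM j s]
    simp only [h1]
    rw [Finset.sum_attach S (fun m => MvPolynomial.monomial m ((g j).coeff m))]
    conv_rhs => rw [← MvPolynomial.support_sum_monomial_coeff (g j)]
    exact (Finset.sum_subset (gsupp j) (fun m _ hm => by
      rw [MvPolynomial.notMem_support_iff.mp hm, map_zero])).symm
  -- transfer between polynomial span and row span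
  have key : ∀ (J : Finset (Fin ν)) (i : Fin ν),
      g i ∈ Submodule.span K (g '' ↑J) ↔ M i ∈ Submodule.span K ((fun j => M j) '' ↑J) := by
    intro J i
    constructor
    · intro hmem
      have h1 : L (g i) ∈ Submodule.map L (Submodule.span K (g '' ↑J)) :=
        Submodule.mem_map_of_mem hmem
      rw [← Submodule.span_image] at h1
      rw [← Set.image_comp] at h1
      have h2 : (⇑L ∘ g) = fun j => M j := funext fun j => hLg j
      rw [h2] at h1
      rwa [hLg i] at h1
    · intro hmem
      have h1 : Rm (M i) ∈ Submodule.map Rm (Submodule.span K ((fun j => M j) '' ↑J)) :=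
        Submodule.mem_map_of_mem hmem
      rw [← Submodule.span_image] at h1
      rw [← Set.image_comp] at h1
      have h2 : (⇑Rm ∘ fun j => M j) = g := funext fun j => hRM j
      rw [h2] at h1
      rwa [hRM i] at h1
  -- the ideal condition is equivalent to the row-span condition
  have ideal_iff : ∀ J : Finset (Fin ν),
      (Ideal.span (Set.range g) = Ideal.span (g '' ↑J)) ↔
        ∀ i, M i ∈ Submodule.span K ((fun j => M j) '' ↑J) := by
    intro J
    constructor
    · intro heq i
      have h1 : g i ∈ Ideal.span (Set.range g) :=
        Ideal.subset_span (Set.mem_range_self i)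
      rw [heq] at h1
      have h2 : g i ∈ Submodule.span K (g '' ↑J) := by
        apply mem_span_of_mem_idealSpan (h := h) ?_ (ghom i) h1
        rintro q ⟨j, _, rfl⟩
        exact ghom j
      exact (key J i).mp h2
    · intro hrows
      apply le_antisymm
      · rw [Ideal.span_le]
        rintro _ ⟨i, rfl⟩
        exact span_le_idealSpan _ ((key J i).mpr (hrows i))
      · exact Ideal.span_mono (Set.image_subset_range _ _)
  rw [Matrix.rank_eq_finrank_span_row]
  change IsLeast _ (Module.finrank K (Submodule.span K (Set.range fun j => M j)))
  constructor
  · -- membership: there is a J of cardinality rank achieving the ideal equality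
    obtain ⟨b, hbsub, hbspan, hbind⟩ := exists_linearIndependent K (Set.range fun j => M j)
    have hbfin : b.Finite := Set.Finite.subset (Set.finite_range _) hbsub
    haveI : Fintype b := hbfin.fintype
    have hchoice : ∀ x : b, ∃ j : Fin ν, M j = (x : {m // m ∈ S} → K) := fun x => hbsub x.2
    choose c hc using hchoice
    have hcinj : Function.Injective c := by
      intro x y hxy
      have : (x : {m // m ∈ S} → K) = y := by rw [← hc x, ← hc y, hxy]
      exact Subtype.ext this
    set J : Finset (Fin ν) := Finset.image c Finset.univ with hJ
    have hMJ : (fun j => M j) '' ↑J = b := by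
      ext v
      constructor
      · rintro ⟨j, hj, rfl⟩
        rw [hJ] at hj
        simp only [Finset.coe_image, Finset.coe_univ, Set.image_univ] at hj
        obtain ⟨x, rfl⟩ := hj
        show M (c x) ∈ b
        rw [hc x]
        exact x.2
      · intro hv
        refine ⟨c ⟨v, hv⟩, ?_, hc ⟨v, hv⟩⟩
        rw [hJ]
        simp
    have hspanJ : Submodule.span K ((fun j => M j) '' ↑J) =
        Submodule.span K (Set.range fun j => M j) := by rw [hMJ, hbspan]
    have hrank_card : Module.finrank K (Submodule.span K (Set.range fun j => M j)) = J.card := by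
      rw [← hbspan, finrank_span_set_eq_card hbind, hJ,
        Finset.card_image_of_injective _ hcinj, Finset.card_univ, Set.toFinset_card]
    constructor
    · -- rank is positive
      rw [hrank_card]
      rcases Finset.eq_empty_or_nonempty J with hJe | hJn
      · exfalso
        have hidem := (ideal_iff J).mpr (fun i => by
          rw [hspanJ]; exact Submodule.subset_span (Set.mem_range_self i))
        -- J nonempty is needed; derive contradiction when J empty
        set j0 : Fin ν := ⟨0, hν⟩
        have hgne : g j0 ≠ 0 := homogenize_ne_zero h (hne j0)
        have h1 : g j0 ∈ Submodule.span K (g '' (↑J : Set (Fin ν)))  :=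
          (key J j0).mpr (by rw [hspanJ]; exact Submodule.subset_span (Set.mem_range_self j0))
        rw [hJe] at h1
        simp only [Finset.coe_empty, Set.image_empty, Submodule.span_empty,
          Submodule.mem_bot] at h1
        exact hgne h1
      · exact Finset.card_pos.mpr hJn
    · refine ⟨J, hrank_card.symm, ?_⟩
      exact (ideal_iff J).mpr (fun i => by
        rw [hspanJ]; exact Submodule.subset_span (Set.mem_range_self i))
  · -- lower bound
    rintro k ⟨hk, J, hJcard, hJeq⟩
    have hrows := (ideal_iff J).mp hJeq
    have hle : Submodule.span K (Set.range fun j => M j) ≤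
        Submodule.span K ((fun j => M j) '' ↑J) := by
      rw [Submodule.span_le]
      rintro _ ⟨i, rfl⟩
      exact hrows i
    calc Module.finrank K (Submodule.span K (Set.range fun j => M j))
        ≤ Module.finrank K (Submodule.span K ((fun j => M j) '' ↑J)) :=
          Submodule.finrank_mono hle
      _ ≤ (J.image fun j => M j).card := by
          rw [← Finset.coe_image]
          exact finrank_span_finset_le_card _
      _ ≤ J.card := Finset.card_image_le
      _ = k := hJcard

end
end

section
/- Let F(x,y;Λ) be a polynomial with real coefficients in plane variables (x,y) and parameters Λ=(Λ₁,…,Λ_t), fix λ ∈ ℝ^t, and let C_λ := {(x,y) ∈ ℝ² : F(x,y;λ) = 0}. Then there exists a finite subset S ⊆ C_λ such that ⋂_{p∈C_λ} Γ_p(𝓕) = ⋂_{p∈S} Γ_p(𝓕), where Γ_p(𝓕) := {μ ∈ ℝ^t : F(p;μ) = 0}. -/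
open MvPolynomial

noncomputable section

/-- reduction to a finite intersection. There is a finite subset
`S ⊆ C_λ` with `⋂_{p∈C_λ} Γ_p(𝓕) = ⋂_{p∈S} Γ_p(𝓕)`. -/
theorem statement11 (t : ℕ)
    (F : MvPolynomial (Fin 2) (MvPolynomial (Fin t) ℝ)) (lam : Fin t → ℝ) :
    ∃ S : Set (Fin 2 → ℝ), S.Finite ∧ S ⊆ Curve F lam ∧
      (⋂ p ∈ Curve F lam, Gamma F p) = ⋂ p ∈ S, Gamma F p := by
  classical
  set T : Set (MvPolynomial (Fin t) ℝ) := houghPoly F '' Curve F lam with hT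
  -- The ideal spanned by T is finitely generated (Hilbert basis theorem).
  obtain ⟨G, hG⟩ := isNoetherian_def.mp inferInstance (Ideal.span T)
  -- Each generator lies in the span of a finite subset of T.
  have hmem : ∀ g ∈ G, ∃ T' : Finset (MvPolynomial (Fin t) ℝ),
      ↑T' ⊆ T ∧ g ∈ Ideal.span (T' : Set (MvPolynomial (Fin t) ℝ)) := by
    intro g hg
    have : g ∈ Ideal.span T := by
      rw [← hG]; exact Ideal.subset_span hg
    exact Submodule.mem_span_finite_of_mem_span this
  choose f hf1 hf2 using hmem
  set T' : Finset (MvPolynomial (Fin t) ℝ) := G.attach.biUnion (fun g => f g.1 g.2) with hT'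
  have hT'sub : (T' : Set (MvPolynomial (Fin t) ℝ)) ⊆ T := by
    intro q hq
    simp only [hT', Finset.coe_biUnion, Set.mem_iUnion] at hq
    obtain ⟨g, hg, hq⟩ := hq
    exact hf1 g.1 g.2 hq
  have hspan : Ideal.span (T' : Set (MvPolynomial (Fin t) ℝ)) = Ideal.span T := by
    apply le_antisymm (Ideal.span_mono hT'sub)
    rw [← hG]
    apply Ideal.span_le.mpr
    intro g hg
    refine Ideal.span_mono ?_ (hf2 g hg)
    intro q hq
    simp only [hT', Finset.coe_biUnion, Set.mem_iUnion]
    exact ⟨⟨g, hg⟩, Finset.mem_attach _ _, hq⟩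
  -- Choose preimage points for elements of T'.
  have hpre : ∀ q ∈ (T' : Set (MvPolynomial (Fin t) ℝ)),
      ∃ p, p ∈ Curve F lam ∧ houghPoly F p = q := fun q hq => hT'sub hq
  choose pt hpt1 hpt2 using hpre
  refine ⟨(fun q : {q // q ∈ (T' : Set (MvPolynomial (Fin t) ℝ))} => pt q.1 q.2) '' Set.univ,
    (Set.finite_univ.image _), ?_, ?_⟩
  · rintro p ⟨q, -, rfl⟩
    exact hpt1 q.1 q.2
  · apply le_antisymm
    · intro mu hmu
      simp only [Set.mem_iInter] at hmu ⊢
      rintro p ⟨q, -, rfl⟩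
      exact hmu _ (hpt1 q.1 q.2)
    · intro mu hmu
      simp only [Set.mem_iInter] at hmu
      have hker : Ideal.span T ≤ RingHom.ker (MvPolynomial.eval mu) := by
        rw [← hspan]
        apply Ideal.span_le.mpr
        intro q hq
        have := hmu (pt q hq) ⟨⟨q, hq⟩, Set.mem_univ _, rfl⟩
        simpa [RingHom.mem_ker, Gamma, hpt2 q hq] using this
      simp only [Set.mem_iInter]
      intro p hp
      have : houghPoly F p ∈ Ideal.span T :=
        Ideal.subset_span ⟨p, hp, rfl⟩
      exact hker this

end
end

section
/- Consider the family of quartic curves with a triple point C_{a,b} : y(x − ay)² − b(x² + y²)² = 0, indexed by real parameters a ∈ ℝ and b > 0, with projective closures x₁(x₀ − a x₁)² x₂ − b(x₀² + x₁²)² = 0 in ℙ²(ℂ). Then for every (x₀,x₁,x₂) ∈ ℂ³ \ {(0,0,0)}, one has x₁(x₀ − a x₁)² x₂ − b(x₀² + x₁²)² = 0 for all a ∈ ℝ and all b > 0 if and only if the point [x₀:x₁:x₂] is one of [0:0:1], [i:1:0], [−i:1:0]. Consequently #B(ℂ) = 3 and ν_opt = d² − #B(ℂ) + 1 = 16 −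 3 + 1 = 14. -/
noncomputable section

/-- The base locus in `ℙ²(ℂ)` of the family of projective quartics with a triple point
`x₁(x₀ − a x₁)² x₂ − b(x₀² + x₁²)² = 0`, `a ∈ ℝ`, `b > 0`. -/
def tripleQuarticBaseLocus : Set (Projectivization ℂ (Fin 3 → ℂ)) :=
  {P | ∀ a b : ℝ, 0 < b →
    P.rep 1 * (P.rep 0 - (a : ℂ) * P.rep 1) ^ 2 * P.rep 2
      - (b : ℂ) * ((P.rep 0) ^ 2 + (P.rep 1) ^ 2) ^ 2 = 0}

lemma aux_ne0 : (![0, 0, 1] : Fin 3 → ℂ) ≠ 0 := by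
  intro h; have := congrFun h 2; simp at this

lemma aux_ne1 : (![Complex.I, 1, 0] : Fin 3 → ℂ) ≠ 0 := by
  intro h; have := congrFun h 1; simp at this

lemma aux_ne2 : (![-Complex.I, 1, 0] : Fin 3 → ℂ) ≠ 0 := by
  intro h; have := congrFun h 1; simp at this

lemma key (v : Fin 3 → ℂ) (hv : v ≠ 0) :
    (∀ a b : ℝ, 0 < b →
        v 1 * (v 0 - (a : ℂ) * v 1) ^ 2 * v 2
          - (b : ℂ) * ((v 0) ^ 2 + (v 1) ^ 2) ^ 2 = 0) ↔
      (Projectivization.mk ℂ v hv = Projectivization.mk ℂ _ aux_ne0 ∨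
       Projectivization.mk ℂ v hv = Projectivization.mk ℂ _ aux_ne1 ∨
       Projectivization.mk ℂ v hv = Projectivization.mk ℂ _ aux_ne2) := by
  rw [Projectivization.mk_eq_mk_iff, Projectivization.mk_eq_mk_iff,
    Projectivization.mk_eq_mk_iff]
  constructor
  · intro h
    have h1 := h 0 1 one_pos
    have h2 := h 0 2 two_pos
    push_cast at h1 h2
    have hS : (v 0) ^ 2 + (v 1) ^ 2 = 0 := by
      have hS2 : ((v 0) ^ 2 + (v 1) ^ 2) ^ 2 = 0 := by linear_combination h1 - h2
      exact (pow_eq_zero_iff two_ne_zero).mp hS2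
    have hT : v 1 * (v 0) ^ 2 * v 2 = 0 := by
      linear_combination h1 + ((v 0) ^ 2 + (v 1) ^ 2) * hS
    by_cases h1z : v 1 = 0
    · have h0z : v 0 = 0 := by
        have h0sq : (v 0) ^ 2 = 0 := by linear_combination hS - (v 1) * h1z
        exact (pow_eq_zero_iff two_ne_zero).mp h0sq
      have h2z : v 2 ≠ 0 := by
        intro h2z
        apply hv
        funext i; fin_cases i <;> simp [h0z, h1z, h2z]
      left
      refine ⟨Units.mk0 (v 2) h2z, ?_⟩
      funext i; fin_cases i <;>
        simp [h0z, h1z, Units.smul_def]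
    · have h2z : v 2 = 0 := by
        have h0sq : (v 0) ^ 2 = -(v 1) ^ 2 := by linear_combination hS
        rcases mul_eq_zero.mp hT with h | h
        · rcases mul_eq_zero.mp h with h | h
          · exact absurd h h1z
          · rw [h0sq] at h
            exact absurd ((pow_eq_zero_iff two_ne_zero).mp (neg_eq_zero.mp h)) h1z
        · exact h
      have hfac : (v 0 - Complex.I * v 1) * (v 0 + Complex.I * v 1) = 0 := by
        linear_combination hS - (v 1) ^ 2 * Complex.I_sq
      rcases mul_eq_zero.mp hfac with h | h
      · right; left
        refine ⟨Units.mk0 (v 1) h1z, ?_⟩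
        funext i; fin_cases i <;> simp [Units.smul_def, h2z] <;> linear_combination -h
      · right; right
        refine ⟨Units.mk0 (v 1) h1z, ?_⟩
        funext i; fin_cases i <;> simp [Units.smul_def, h2z] <;> linear_combination -h
  · rintro (⟨c, hc⟩ | ⟨c, hc⟩ | ⟨c, hc⟩) <;> intro a b hb <;>
      [skip; skip; skip] <;> try skip
    · have e0 : v 0 = 0 := by
        have := congrFun hc 0; simpa [Units.smul_def] using this.symm
      have e1 : v 1 = 0 := by
        have := congrFun hc 1; simpa [Units.smul_def] using this.symm
      rw [e0, e1]; ring
    · have e0 := congrFun hc 0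
      have e1 := congrFun hc 1
      have e2 := congrFun hc 2
      simp only [Pi.smul_apply, Units.smul_def, smul_eq_mul, Matrix.cons_val_zero,
        Matrix.cons_val_one, Matrix.head_cons, Matrix.cons_val_two, Matrix.tail_cons,
        mul_one, mul_zero] at e0 e1 e2
      have hs : (v 0) ^ 2 + (v 1) ^ 2 = 0 := by
        rw [← e0, ← e1]; linear_combination (c : ℂ) ^ 2 * Complex.I_sq
      linear_combination -(v 1 * (v 0 - (a : ℂ) * v 1) ^ 2) * e2
        - (b : ℂ) * ((v 0) ^ 2 + (v 1) ^ 2) * hs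
    · have e0 := congrFun hc 0
      have e1 := congrFun hc 1
      have e2 := congrFun hc 2
      simp only [Pi.smul_apply, Units.smul_def, smul_eq_mul, Matrix.cons_val_zero,
        Matrix.cons_val_one, Matrix.head_cons, Matrix.cons_val_two, Matrix.tail_cons,
        mul_one, mul_zero] at e0 e1 e2
      have hs : (v 0) ^ 2 + (v 1) ^ 2 = 0 := by
        rw [← e0, ← e1]; linear_combination (c : ℂ) ^ 2 * Complex.I_sq
      linear_combination -(v 1 * (v 0 - (a : ℂ) * v 1) ^ 2) * e2
        - (b : ℂ) * ((v 0) ^ 2 + (v 1) ^ 2) * hs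

/-- quartic with a triple point. A nonzero `(x₀,x₁,x₂) ∈ ℂ³` satisfies
`x₁(x₀ − a x₁)² x₂ − b(x₀² + x₁²)² = 0` for all `a ∈ ℝ` and all `b > 0` iff the point
`[x₀:x₁:x₂]` is one of `[0:0:1]`, `[i:1:0]`, `[−i:1:0]`; consequently `#B(ℂ) = 3` and
`ν_opt = 4² − 3 + 1 = 14`. -/
theorem statement13 :
    (∀ v : Fin 3 → ℂ, (hv : v ≠ 0) →
      ((∀ a b : ℝ, 0 < b →
          v 1 * (v 0 - (a : ℂ) * v 1) ^ 2 * v 2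
            - (b : ℂ) * ((v 0) ^ 2 + (v 1) ^ 2) ^ 2 = 0) ↔
        (Projectivization.mk ℂ v hv = Projectivization.mk ℂ (![0, 0, 1] : Fin 3 → ℂ)
            (by intro h; have := congrFun h 2; simp at this) ∨
         Projectivization.mk ℂ v hv = Projectivization.mk ℂ (![Complex.I, 1, 0] : Fin 3 → ℂ)
            (by intro h; have := congrFun h 1; simp at this) ∨
         Projectivization.mk ℂ v hv = Projectivization.mk ℂ (![-Complex.I, 1, 0] : Fin 3 → ℂ)
            (by intro h; have := congrFun h 1; simp at this)))) ∧
    tripleQuarticBaseLocus.ncard = 3 ∧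
    4 ^ 2 - tripleQuarticBaseLocus.ncard + 1 = 14 := by
  set P0 := Projectivization.mk ℂ _ aux_ne0
  set P1 := Projectivization.mk ℂ _ aux_ne1
  set P2 := Projectivization.mk ℂ _ aux_ne2
  have hset : tripleQuarticBaseLocus = {P0, P1, P2} := by
    ext P
    have h := key P.rep P.rep_nonzero
    rw [Projectivization.mk_rep] at h
    simpa [tripleQuarticBaseLocus, Set.mem_setOf_eq] using h
  have d01 : P0 ≠ P1 := by
    intro h
    rw [Projectivization.mk_eq_mk_iff] at h
    obtain ⟨c, hc⟩ := h
    have h1 := congrFun hc 1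
    simp [Units.smul_def] at h1
  have d02 : P0 ≠ P2 := by
    intro h
    rw [Projectivization.mk_eq_mk_iff] at h
    obtain ⟨c, hc⟩ := h
    have h1 := congrFun hc 1
    simp [Units.smul_def] at h1
  have d12 : P1 ≠ P2 := by
    intro h
    rw [Projectivization.mk_eq_mk_iff] at h
    obtain ⟨c, hc⟩ := h
    have h1 := congrFun hc 1
    have h0 := congrFun hc 0
    simp only [Pi.smul_apply, Units.smul_def, smul_eq_mul, Matrix.cons_val_zero,
      Matrix.cons_val_one, Matrix.head_cons, mul_one] at h1 h0
    rw [h1] at h0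
    exact Complex.I_ne_zero (by linear_combination -h0/2)
  have hcard : tripleQuarticBaseLocus.ncard = 3 := by
    rw [hset]
    exact Set.ncard_eq_three.mpr ⟨P0, P1, P2, d01, d02, d12, rfl⟩
  exact ⟨fun v hv => key v hv, hcard, by rw [hcard]; norm_num⟩

end
end
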